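/- arXiv:1812.02434 — 2 statements merged into one kernel-verified Lean document; each statement's English description precedes it below -/
import Mathlib

section
/- Let n be odd, a_1,…,a_n positive integers with a_n ≥ 3, and N = a_1 + ⋯ + a_n − 1. Then F[a_1,…,a_n] = (1 + y_N)·F[a_1,…,a_{n−1}, a_n − 1] − y_{N−1}·F[a_1,…,a_{n−1}, a_n − 2], and F[a_1,…,a_n] = (1 + y_N)·F[a_1,…,a_{n−1}] + y_{N−1} y_N·F[a_1,…,a_{n−1}, a_n − 2]. -/
/-!
Ancestral triangles of continued fractions (Yamada / Farey diagrams),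
following "Cluster variables and Alexander polynomials of 2-bridge knots".
-/

noncomputable section

open scoped BigOperators

attribute [local instance] Classical.propDecidable

namespace TwoBridge

/-- The continued fraction `[a₁,…,aₙ] = 1/(a₁ + 1/(a₂ + ⋯ + 1/aₙ))`. -/
def cf : List ℕ → ℚ
  | [] => 0
  | a :: t => 1 / ((a : ℚ) + cf t)

/-- Partial sums `l_k = a₁ + ⋯ + a_k`. -/
def ell (a : List ℕ) (k : ℕ) : ℕ := (a.take k).sum

/-- The index of the fan containing the `i`-th triangle (1-based): the least `k` with
`i ≤ l_k − 1`.  Fan 1 consists of `T_1, …, T_{a₁−1}` and, for `k ≥ 2`, fan `k` consists of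
`T_{l_{k−1}}, …, T_{l_k − 1}`. -/
def fanIdx (a : List ℕ) (i : ℕ) : ℕ := sInf {k | i < ell a k}

/-- The `i`-th triangle (1-based) of the ancestral triangle of `[a₁,…,aₙ]` is a *right*
triangle iff it lies in an odd-indexed fan (first `a₁ − 1` triangles are right, the next
`a₂` left, the next `a₃` right, and so on alternately). -/
def isRight (a : List ℕ) (i : ℕ) : Prop := Odd (fanIdx a i)

/-- Vertex indices of the ancestral triangle: `0 ↦ 0/1`, `1 ↦ 1/1`, and `j + 1 ↦` the apex
(new vertex) of the triangle `T_j`.  `edgeIdx a i` is the pair of vertex indices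
(left endpoint, right endpoint) of the most recently created edge after stacking `i`
triangles; the triangle `T_{i+1}` is stacked on this edge. -/
def edgeIdx (a : List ℕ) : ℕ → ℕ × ℕ
  | 0 => (0, 1)
  | i + 1 => if isRight a (i + 1) then ((edgeIdx a i).1, i + 2) else (i + 2, (edgeIdx a i).2)

/-- The labels (numerator, denominator) of the endpoints of the active edge after stacking
`i` triangles; the new vertex of each triangle is labelled by the mediant of the two
endpoints of the edge it is stacked on. -/
def edgeLbl (a : List ℕ) : ℕ → (ℕ × ℕ) × (ℕ × ℕ)
  | 0 => ((0, 1), (1, 1))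
  | i + 1 =>
      if isRight a (i + 1) then
        ((edgeLbl a i).1,
          ((edgeLbl a i).1.1 + (edgeLbl a i).2.1, (edgeLbl a i).1.2 + (edgeLbl a i).2.2))
      else
        (((edgeLbl a i).1.1 + (edgeLbl a i).2.1, (edgeLbl a i).1.2 + (edgeLbl a i).2.2),
          (edgeLbl a i).2)

/-- The label (numerator, denominator) of the vertex with index `v`. -/
def vtxLabel (a : List ℕ) (v : ℕ) : ℕ × ℕ :=
  if v = 0 then (0, 1)
  else if v = 1 then (1, 1)
  else ((edgeLbl a (v - 2)).1.1 + (edgeLbl a (v - 2)).2.1,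
        (edgeLbl a (v - 2)).1.2 + (edgeLbl a (v - 2)).2.2)

/-- `u` and `w` are joined by an edge of the ancestral triangle. -/
def IsEdgeAT (a : List ℕ) (u w : ℕ) : Prop :=
  (u = 0 ∧ w = 1) ∨ (u = 1 ∧ w = 0) ∨
    (2 ≤ u ∧ (w = (edgeIdx a (u - 2)).1 ∨ w = (edgeIdx a (u - 2)).2)) ∨
    (2 ≤ w ∧ (u = (edgeIdx a (w - 2)).1 ∨ u = (edgeIdx a (w - 2)).2))

/-- A step of a path: an edge of the ancestral triangle along which the denominator of the
vertex label strictly decreases. -/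
def IsStep (a : List ℕ) (u w : ℕ) : Prop :=
  IsEdgeAT a u w ∧ (vtxLabel a w).2 < (vtxLabel a u).2

/-- `IsPathFrom a s γ` : `γ` is a path of the ancestral triangle of `a` starting at the
vertex with index `s` and ending at `0/1` or `1/1`, the denominator of the label strictly
decreasing along every edge. -/
def IsPathFrom (a : List ℕ) (s : ℕ) (γ : List ℕ) : Prop :=
  γ.head? = some s ∧ (γ.getLast? = some 0 ∨ γ.getLast? = some 1) ∧ List.Chain' (IsStep a) γ

/-- The (indices of the) triangles cut off to the left of the path by a single step from
vertex `u` down to vertex `w`. -/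
def stepLeft (a : List ℕ) (u w : ℕ) : Finset ℕ :=
  if 2 ≤ u ∧ w = (edgeIdx a (u - 2)).2 then Finset.Ioc (w - 1) (u - 1) else ∅

/-- The set `S_γ` of (indices of) triangles lying on the left side of the path `γ`. -/
def pathLeftSet (a : List ℕ) (γ : List ℕ) : Finset ℕ :=
  (γ.zip γ.tail).foldr (fun p s => stepLeft a p.1 p.2 ∪ s) ∅


/-- The `F`-polynomial `F_{p/q} = Σ_{γ ∈ Γ_{p/q}} ∏_{T_i ∈ S_γ} y_i` of `p/q = [a₁,…,aₙ]`
(the variable `y_i` is `MvPolynomial.X i`; the top vertex has index `a.sum = N + 1`).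
For the empty continued fraction this gives `1`. -/
def Fpoly (a : List ℕ) : MvPolynomial ℕ ℤ :=
  ∑ᶠ γ ∈ {γ : List ℕ | IsPathFrom a a.sum γ},
    ∏ i ∈ pathLeftSet a γ, (MvPolynomial.X i : MvPolynomial ℕ ℤ)

/-- `F`-polynomial with the convention `F[a₁,…,a_{n−1},0] = F[a₁,…,a_{n−2}]`. -/
def FpolyC (l : List ℕ) : MvPolynomial ℕ ℤ :=
  if l.getLast? = some 0 then Fpoly l.dropLast.dropLast else Fpoly l

/-! ### Auxiliary development -/

section Aux

open MvPolynomial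

/-- The sum of `F`-monomials over all paths starting at vertex `s`. -/
def Ffrom (a : List ℕ) (s : ℕ) : MvPolynomial ℕ ℤ :=
  ∑ᶠ γ ∈ {γ : List ℕ | IsPathFrom a s γ},
    ∏ i ∈ pathLeftSet a γ, (MvPolynomial.X i : MvPolynomial ℕ ℤ)

lemma Fpoly_eq_Ffrom (a : List ℕ) : Fpoly a = Ffrom a a.sum := rfl

lemma edgeIdx_le (a : List ℕ) (j : ℕ) :
    (edgeIdx a j).1 ≤ j + 1 ∧ (edgeIdx a j).2 ≤ j + 1 := by
  induction j with
  | zero => simp [edgeIdx]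
  | succ k ih =>
    rw [edgeIdx]
    split <;> simp <;> omega

lemma edgeIdx_ne (a : List ℕ) (j : ℕ) : (edgeIdx a j).1 ≠ (edgeIdx a j).2 := by
  induction j with
  | zero => simp [edgeIdx]
  | succ k ih =>
    have h := edgeIdx_le a k
    rw [edgeIdx]
    split <;> simp <;> omega

lemma edgeLbl_denom_pos (a : List ℕ) (i : ℕ) :
    1 ≤ (edgeLbl a i).1.2 ∧ 1 ≤ (edgeLbl a i).2.2 := by
  induction i with
  | zero => simp [edgeLbl]
  | succ k ih =>
    rw [edgeLbl]
    split <;> simp <;> omega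

lemma denomSum_lt (a : List ℕ) {i j : ℕ} (h : i < j) :
    (edgeLbl a i).1.2 + (edgeLbl a i).2.2 <
      (edgeLbl a j).1.2 + (edgeLbl a j).2.2 := by
  have step : ∀ k : ℕ,
      (fun k => (edgeLbl a k).1.2 + (edgeLbl a k).2.2) k <
        (fun k => (edgeLbl a k).1.2 + (edgeLbl a k).2.2) (k + 1) := by
    intro k
    have h1 := edgeLbl_denom_pos a k
    simp only
    rw [edgeLbl]
    split <;> simp <;> omega
  exact strictMono_nat_of_lt_succ step h

lemma vtx_denom (a : List ℕ) {v : ℕ} (hv : 2 ≤ v) :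
    (vtxLabel a v).2 = (edgeLbl a (v - 2)).1.2 + (edgeLbl a (v - 2)).2.2 := by
  unfold vtxLabel
  rw [if_neg (by omega), if_neg (by omega)]

lemma vtx_denom_small (a : List ℕ) {v : ℕ} (hv : v ≤ 1) : (vtxLabel a v).2 = 1 := by
  interval_cases v <;> simp [vtxLabel]

lemma vtx_denom_lt (a : List ℕ) {w u : ℕ} (hu : 2 ≤ u) (hw : w < u) :
    (vtxLabel a w).2 < (vtxLabel a u).2 := by
  rw [vtx_denom a hu]
  have h2 := edgeLbl_denom_pos a (u - 2)
  by_cases h : 2 ≤ w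
  · rw [vtx_denom a h]
    exact denomSum_lt a (by omega)
  · rw [vtx_denom_small a (by omega)]
    omega

lemma not_isStep_small (a : List ℕ) {u : ℕ} (hu : u ≤ 1) (w : ℕ) : ¬ IsStep a u w := by
  rintro ⟨hedge, hden⟩
  rw [vtx_denom_small a hu] at hden
  rcases hedge with ⟨h1, h2⟩ | ⟨h1, h2⟩ | ⟨h1, h2⟩ | ⟨h1, h2⟩
  · subst h1; subst h2; rw [vtx_denom_small a le_rfl] at hden; omega
  · subst h1; subst h2; rw [vtx_denom_small a (by omega)] at hden; omega
  · omega
  · have := vtx_denom a h1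
    have := edgeLbl_denom_pos a (w - 2)
    omega

lemma isStep_iff (a : List ℕ) {u : ℕ} (hu : 2 ≤ u) (w : ℕ) :
    IsStep a u w ↔ w = (edgeIdx a (u - 2)).1 ∨ w = (edgeIdx a (u - 2)).2 := by
  constructor
  · rintro ⟨hedge, hden⟩
    rcases hedge with ⟨h1, h2⟩ | ⟨h1, h2⟩ | ⟨h1, h2⟩ | ⟨h1, h2⟩
    · omega
    · omega
    · exact h2
    · exfalso
      have hle := edgeIdx_le a (w - 2)
      have huw : u < w := by rcases h2 with h | h <;> omega
      have := vtx_denom_lt a h1 huw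
      omega
  · intro h
    refine ⟨Or.inr (Or.inr (Or.inl ⟨hu, h⟩)), ?_⟩
    have hle := edgeIdx_le a (u - 2)
    have hwu : w < u := by rcases h with h | h <;> omega
    exact vtx_denom_lt a hu hwu

lemma isStep_lt (a : List ℕ) {u w : ℕ} (h : IsStep a u w) : 2 ≤ u ∧ w < u := by
  by_cases hu : 2 ≤ u
  · have hle := edgeIdx_le a (u - 2)
    have := (isStep_iff a hu w).mp h
    constructor
    · exact hu
    · rcases this with h | h <;> omega
  · exact absurd h (not_isStep_small a (by omega) w)

lemma pathLeftSet_nil (a : List ℕ) : pathLeftSet a [] = ∅ := rfl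

lemma pathLeftSet_single (a : List ℕ) (s : ℕ) : pathLeftSet a [s] = ∅ := rfl

lemma pathLeftSet_cons (a : List ℕ) (u v : ℕ) (t : List ℕ) :
    pathLeftSet a (u :: v :: t) = stepLeft a u v ∪ pathLeftSet a (v :: t) := rfl

lemma path_from_small (a : List ℕ) {s : ℕ} (hs : s ≤ 1) :
    {γ : List ℕ | IsPathFrom a s γ} = {[s]} := by
  ext γ
  simp only [Set.mem_setOf_eq, Set.mem_singleton_iff]
  constructor
  · rintro ⟨h1, h2, h3⟩
    match γ with
    | [] => simp at h1
    | x :: t =>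
      have hx : x = s := by simpa using h1
      subst hx
      cases t with
      | nil => rfl
      | cons y t' =>
        exact absurd (List.isChain_cons_cons.mp h3).1 (not_isStep_small a hs y)
  · rintro rfl
    refine ⟨rfl, ?_, List.isChain_singleton s⟩
    interval_cases s
    · left; rfl
    · right; rfl

lemma path_from_eq (a : List ℕ) {s : ℕ} (hs : 2 ≤ s) :
    {γ : List ℕ | IsPathFrom a s γ} =
      (List.cons s) '' {γ | IsPathFrom a (edgeIdx a (s - 2)).1 γ} ∪
        (List.cons s) '' {γ | IsPathFrom a (edgeIdx a (s - 2)).2 γ} := by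
  ext γ
  simp only [Set.mem_setOf_eq, Set.mem_union, Set.mem_image]
  constructor
  · rintro ⟨h1, h2, h3⟩
    match γ with
    | [] => simp at h1
    | [x] =>
      exfalso
      have hx : x = s := by simpa using h1
      subst hx
      simp only [List.getLast?_singleton, Option.some.injEq] at h2
      omega
    | x :: y :: t =>
      obtain rfl : s = x := by simpa using h1.symm
      have hstep : IsStep a s y := (List.isChain_cons_cons.mp h3).1
      have hy := (isStep_iff a hs y).mp hstep
      have h2' : (y :: t).getLast? = some 0 ∨ (y :: t).getLast? = some 1 := by
        rwa [List.getLast?_cons_cons] at h2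
      have hpath : IsPathFrom a y (y :: t) :=
        ⟨rfl, h2', (List.isChain_cons_cons.mp h3).2⟩
      rcases hy with hy | hy
      · exact Or.inl ⟨y :: t, by rw [← hy]; exact hpath, rfl⟩
      · exact Or.inr ⟨y :: t, by rw [← hy]; exact hpath, rfl⟩
  · have build : ∀ w, (w = (edgeIdx a (s - 2)).1 ∨ w = (edgeIdx a (s - 2)).2) →
        ∀ t, IsPathFrom a w t → IsPathFrom a s (s :: t) := by
      rintro w hw t ⟨h1, h2, h3⟩
      match t with
      | [] => simp at h1
      | y :: t' =>
        have hy : y = w := by simpa using h1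
        subst hy
        refine ⟨rfl, ?_, List.isChain_cons_cons.mpr ⟨(isStep_iff a hs y).mpr hw, h3⟩⟩
        rwa [List.getLast?_cons_cons]
    rintro (⟨t, ht, rfl⟩ | ⟨t, ht, rfl⟩)
    · exact build _ (Or.inl rfl) t ht
    · exact build _ (Or.inr rfl) t ht

lemma pathSet_finite (a : List ℕ) (s : ℕ) : {γ : List ℕ | IsPathFrom a s γ}.Finite := by
  induction s using Nat.strong_induction_on with
  | _ s ih =>
    by_cases hs : 2 ≤ s
    · rw [path_from_eq a hs]
      have h1 := edgeIdx_le a (s - 2)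
      exact ((ih _ (by omega)).image _).union ((ih _ (by omega)).image _)
    · rw [path_from_small a (by omega)]
      exact Set.finite_singleton _

lemma pathLeftSet_lt (a : List ℕ) : ∀ (γ : List ℕ), List.Chain' (IsStep a) γ →
    ∀ w, γ.head? = some w → ∀ x ∈ pathLeftSet a γ, x < w := by
  intro γ
  induction γ with
  | nil => intro _ w hw; simp at hw
  | cons u t ih =>
    intro hch w hw x hx
    obtain rfl : w = u := by simpa using hw.symm
    cases t with
    | nil => simp [pathLeftSet_single] at hx
    | cons v t' =>
      have hstep : IsStep a w v := (List.isChain_cons_cons.mp hch).1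
      have hlt := isStep_lt a hstep
      rw [pathLeftSet_cons, Finset.mem_union] at hx
      rcases hx with h | h
      · unfold stepLeft at h
        split at h
        · have := Finset.mem_Ioc.mp h
          omega
        · simp at h
      · exact lt_trans (ih (List.isChain_cons_cons.mp hch).2 v rfl x h) hlt.2

lemma Ffrom_small (a : List ℕ) {s : ℕ} (hs : s ≤ 1) : Ffrom a s = 1 := by
  unfold Ffrom
  rw [path_from_small a hs, finsum_mem_singleton, pathLeftSet_single, Finset.prod_empty]

lemma stepLeft_left (a : List ℕ) (s : ℕ) :
    stepLeft a s (edgeIdx a (s - 2)).1 = ∅ := by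
  unfold stepLeft
  rw [if_neg]
  rintro ⟨h1, h2⟩
  exact edgeIdx_ne a (s - 2) h2

lemma stepLeft_right (a : List ℕ) {s : ℕ} (hs : 2 ≤ s) :
    stepLeft a s (edgeIdx a (s - 2)).2 = Finset.Ioc ((edgeIdx a (s - 2)).2 - 1) (s - 1) := by
  unfold stepLeft
  rw [if_pos ⟨hs, rfl⟩]

/-- The contribution to `Ffrom a s` of the paths whose first step goes to `w`. -/
lemma Ffrom_branch (a : List ℕ) {s : ℕ} (hs : 2 ≤ s) {w : ℕ}
    (hw : w = (edgeIdx a (s - 2)).1 ∨ w = (edgeIdx a (s - 2)).2) :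
    (∑ᶠ γ ∈ (List.cons s) '' {γ : List ℕ | IsPathFrom a w γ},
        ∏ i ∈ pathLeftSet a γ, (MvPolynomial.X i : MvPolynomial ℕ ℤ)) =
      (∏ i ∈ stepLeft a s w, (MvPolynomial.X i : MvPolynomial ℕ ℤ)) * Ffrom a w := by
  have hinj : Set.InjOn (List.cons s) {γ : List ℕ | IsPathFrom a w γ} := by
    intro x _ y _ h
    exact (List.cons.injEq _ _ _ _ ▸ h : s = s ∧ x = y).2
  rw [finsum_mem_image hinj]
  have hcong : ∀ γ ∈ {γ : List ℕ | IsPathFrom a w γ},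
      (∏ i ∈ pathLeftSet a (s :: γ), (MvPolynomial.X i : MvPolynomial ℕ ℤ)) =
        (∏ i ∈ stepLeft a s w, (MvPolynomial.X i : MvPolynomial ℕ ℤ)) *
          ∏ i ∈ pathLeftSet a γ, (MvPolynomial.X i : MvPolynomial ℕ ℤ) := by
    rintro γ ⟨h1, h2, h3⟩
    match γ with
    | [] => simp at h1
    | y :: t =>
      obtain rfl : w = y := by simpa using h1.symm
      rw [pathLeftSet_cons]
      refine Finset.prod_union ?_
      rw [Finset.disjoint_left]
      intro x hx hx'
      have hxlt : x < w := pathLeftSet_lt a (w :: t) h3 w rfl x hx'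
      unfold stepLeft at hx
      split at hx
      · have := Finset.mem_Ioc.mp hx
        omega
      · simp at hx
  rw [finsum_mem_congr rfl hcong]
  unfold Ffrom
  rw [finsum_mem_eq_finite_toFinset_sum _ (pathSet_finite a w),
    finsum_mem_eq_finite_toFinset_sum _ (pathSet_finite a w), Finset.mul_sum]

lemma Ffrom_rec (a : List ℕ) {s : ℕ} (hs : 2 ≤ s) :
    Ffrom a s = Ffrom a (edgeIdx a (s - 2)).1 +
      (∏ i ∈ Finset.Ioc ((edgeIdx a (s - 2)).2 - 1) (s - 1),
          (MvPolynomial.X i : MvPolynomial ℕ ℤ)) * Ffrom a (edgeIdx a (s - 2)).2 := by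
  have hdisj : Disjoint
      ((List.cons s) '' {γ : List ℕ | IsPathFrom a (edgeIdx a (s - 2)).1 γ})
      ((List.cons s) '' {γ : List ℕ | IsPathFrom a (edgeIdx a (s - 2)).2 γ}) := by
    rw [Set.disjoint_left]
    rintro γ ⟨t, ht, rfl⟩ ⟨t', ht', he⟩
    have : t' = t := by simpa using he
    subst this
    have e1 : t'.head? = some (edgeIdx a (s - 2)).1 := ht.1
    have e2 : t'.head? = some (edgeIdx a (s - 2)).2 := ht'.1
    rw [e1] at e2
    exact edgeIdx_ne a (s - 2) (by simpa using e2)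
  conv_lhs => rw [Ffrom, path_from_eq a hs]
  rw [finsum_mem_union hdisj ((pathSet_finite a _).image _) ((pathSet_finite a _).image _),
    Ffrom_branch a hs (Or.inl rfl), Ffrom_branch a hs (Or.inr rfl),
    stepLeft_left, stepLeft_right a hs, Finset.prod_empty, one_mul]

lemma edgeIdx_congr {b c : List ℕ} : ∀ (j : ℕ),
    (∀ i, i ≤ j → fanIdx b i = fanIdx c i) → edgeIdx b j = edgeIdx c j := by
  intro j
  induction j with
  | zero => intro _; rfl
  | succ k ih =>
    intro h
    have h1 : edgeIdx b k = edgeIdx c k := ih fun i hi => h i (by omega)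
    have h2 : isRight b (k + 1) ↔ isRight c (k + 1) := by
      unfold isRight
      rw [h (k + 1) le_rfl]
    rw [edgeIdx, edgeIdx, h1]
    by_cases hr : isRight b (k + 1)
    · rw [if_pos hr, if_pos (h2.mp hr)]
    · rw [if_neg hr, if_neg fun hc => hr (h2.mpr hc)]

lemma Ffrom_congr {b c : List ℕ} : ∀ (v : ℕ),
    (∀ j, j + 2 ≤ v → edgeIdx b j = edgeIdx c j) → Ffrom b v = Ffrom c v := by
  intro v
  induction v using Nat.strong_induction_on with
  | _ v ih =>
    intro h
    by_cases hv : 2 ≤ v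
    · have he : edgeIdx b (v - 2) = edgeIdx c (v - 2) := h (v - 2) (by omega)
      have hle := edgeIdx_le b (v - 2)
      rw [he] at hle
      rw [Ffrom_rec b hv, Ffrom_rec c hv, he]
      rw [ih (edgeIdx c (v - 2)).1 (by omega) (fun j hj => h j (by omega)),
        ih (edgeIdx c (v - 2)).2 (by omega) (fun j hj => h j (by omega))]
    · rw [Ffrom_small b (by omega), Ffrom_small c (by omega)]

lemma ell_le_sum (l : List ℕ) (k : ℕ) : ell l k ≤ l.sum := by
  unfold ell
  conv_rhs => rw [← List.take_append_drop k l]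
  rw [List.sum_append]
  omega

lemma ell_of_le (l : List ℕ) {k : ℕ} (hk : l.length ≤ k) : ell l k = l.sum := by
  unfold ell
  rw [List.take_of_length_le hk]

lemma ell_append_of_le (as : List ℕ) (m : ℕ) {k : ℕ} (hk : k ≤ as.length) :
    ell (as ++ [m]) k = ell as k := by
  unfold ell
  rw [List.take_append_of_le_length hk]

lemma sum_append_single (as : List ℕ) (m : ℕ) : (as ++ [m]).sum = as.sum + m := by
  simp

/-- `fanIdx` only depends on the part of the list before the index. -/
lemma fanIdx_append_congr (as : List ℕ) (m m' : ℕ) (hm : m' ≤ m) {i : ℕ}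
    (hi : i < as.sum + m') : fanIdx (as ++ [m]) i = fanIdx (as ++ [m']) i := by
  unfold fanIdx
  congr 1
  ext k
  simp only [Set.mem_setOf_eq]
  by_cases hk : k ≤ as.length
  · rw [ell_append_of_le as m hk, ell_append_of_le as m' hk]
  · rw [ell_of_le _ (by simp; omega), ell_of_le _ (by simp; omega),
      sum_append_single, sum_append_single]
    omega

lemma fanIdx_append_base (as : List ℕ) (m : ℕ) {i : ℕ} (hi : i < as.sum) :
    fanIdx (as ++ [m]) i = fanIdx as i := by
  unfold fanIdx
  congr 1
  ext k
  simp only [Set.mem_setOf_eq]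
  by_cases hk : k ≤ as.length
  · rw [ell_append_of_le as m hk]
  · rw [ell_of_le _ (by simp; omega), ell_of_le as (by omega), sum_append_single]
    omega

/-- The value of `fanIdx` in the last fan. -/
lemma fanIdx_last (as : List ℕ) (m : ℕ) {i : ℕ} (h1 : as.sum ≤ i)
    (h2 : i < as.sum + m) : fanIdx (as ++ [m]) i = as.length + 1 := by
  have hmem : as.length + 1 ∈ {k | i < ell (as ++ [m]) k} := by
    simp only [Set.mem_setOf_eq]
    rw [ell_of_le _ (by simp), sum_append_single]
    exact h2
  have hnot : ∀ k, k < as.length + 1 → k ∉ {k | i < ell (as ++ [m]) k} := by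
    intro k hk
    simp only [Set.mem_setOf_eq, not_lt]
    rw [ell_append_of_le as m (by omega)]
    exact le_trans (ell_le_sum as k) h1
  refine le_antisymm (Nat.sInf_le hmem) ?_
  by_contra hc
  push_neg at hc
  exact hnot _ hc (Nat.sInf_mem ⟨_, hmem⟩)

lemma Ioc_pred_self {x : ℕ} (hx : 1 ≤ x) : Finset.Ioc (x - 1) x = {x} := by
  ext y
  simp only [Finset.mem_Ioc, Finset.mem_singleton]
  omega

lemma length_le_sum (l : List ℕ) (h : ∀ x ∈ l, 0 < x) : l.length ≤ l.sum := by
  induction l with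
  | nil => simp
  | cons a t ih =>
    simp only [List.length_cons, List.sum_cons]
    have h1 := h a (by simp)
    have h2 := ih fun x hx => h x (by simp [hx])
    omega

lemma take_sum_lt {as : List ℕ} (hpos : ∀ x ∈ as, 0 < x) {k : ℕ}
    (hk : k < as.length) : ell as k < as.sum := by
  have hd : 0 < (as.drop k).sum := by
    have hlen : 0 < (as.drop k).length := by simp; omega
    have := length_le_sum (as.drop k) fun x hx => hpos x (List.mem_of_mem_drop hx)
    omega
  have hsplit : ell as k + (as.drop k).sum = as.sum := by
    unfold ell
    rw [← List.sum_append, List.take_append_drop]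
  omega

lemma fanIdx_eq_of {b : List ℕ} {i n : ℕ} (hmem : i < ell b n)
    (hbelow : ∀ k, k < n → ell b k ≤ i) : fanIdx b i = n := by
  have hmem' : n ∈ {k | i < ell b k} := hmem
  refine le_antisymm (Nat.sInf_le hmem') ?_
  by_contra hc
  push_neg at hc
  exact absurd (Nat.sInf_mem ⟨_, hmem'⟩) (by simpa [fanIdx] using hbelow _ hc)

lemma fanIdx_last' (as : List ℕ) (m : ℕ) {i : ℕ} (h1 : as.sum ≤ i)
    (h2 : i < as.sum + m) : fanIdx (as ++ [m]) i = as.length + 1 := by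
  refine fanIdx_eq_of ?_ ?_
  · rw [ell_of_le _ (by simp), sum_append_single]; exact h2
  · intro k hk
    rw [ell_append_of_le as m (by omega)]
    exact le_trans (ell_le_sum as k) h1

lemma edgeIdx_fst_last (as : List ℕ) (an : ℕ) (hpos : ∀ x ∈ as, 0 < x)
    (heven : Even as.length) :
    ∀ j, as.sum - 1 ≤ j → j ≤ as.sum + an - 2 → (edgeIdx (as ++ [an]) j).1 = as.sum := by
  intro j
  induction j using Nat.strong_induction_on with
  | _ j ih =>
    intro hj1 hj2
    by_cases hbase : j = as.sum - 1
    · subst hbase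
      rcases List.eq_nil_or_concat' as with rfl | ⟨t, x, rfl⟩
      · rfl
      · set as := t ++ [x] with has
        have hlen2 : 2 ≤ as.length := by
          have h1 : as.length ≠ 0 := by simp [has]
          rcases heven with ⟨c, hc⟩
          omega
        have hM : 2 ≤ as.sum := le_trans hlen2 (length_le_sum as hpos)
        have hfan : fanIdx (as ++ [an]) (as.sum - 1) = as.length := by
          refine fanIdx_eq_of ?_ ?_
          · rw [ell_append_of_le as an le_rfl, ell_of_le as le_rfl]
            omega
          · intro k hk
            rw [ell_append_of_le as an (by omega)]
            have := take_sum_lt hpos hk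
            omega
        have hnr : ¬ isRight (as ++ [an]) (as.sum - 1) := by
          unfold isRight
          rw [hfan, ← Nat.not_even_iff_odd]
          exact fun h => h heven
        have he : as.sum - 1 = (as.sum - 2) + 1 := by omega
        rw [he] at hnr ⊢
        rw [edgeIdx, if_neg hnr]
        simp
        omega
    · have hj : as.sum ≤ j := by omega
      obtain ⟨k, rfl⟩ : ∃ k, j = k + 1 := by
        rcases Nat.exists_eq_add_of_le hj with ⟨c, hc⟩
        cases j with
        | zero =>
          exfalso
          have : as.sum = 0 := by omega
          omega
        | succ k => exact ⟨k, rfl⟩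
      have hr : isRight (as ++ [an]) (k + 1) := by
        unfold isRight
        rw [fanIdx_last' as an (by omega) (by omega)]
        exact heven.add_one
      rw [edgeIdx, if_pos hr]
      exact ih k (by omega) (by omega) (by omega)

lemma edgeIdx_last_eq (as : List ℕ) (an : ℕ) (hpos : ∀ x ∈ as, 0 < x)
    (heven : Even as.length) {j : ℕ} (hj1 : as.sum ≤ j) (hj2 : j ≤ as.sum + an - 2)
    (han : 2 ≤ an) : edgeIdx (as ++ [an]) j = (as.sum, j + 1) := by
  cases j with
  | zero =>
    have : as.sum = 0 := by omega
    rw [this]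
    rfl
  | succ k =>
    have hr : isRight (as ++ [an]) (k + 1) := by
      unfold isRight
      rw [fanIdx_last' as an (by omega) (by omega)]
      exact heven.add_one
    rw [edgeIdx, if_pos hr,
      edgeIdx_fst_last as an hpos heven k (by omega) (by omega)]

end Aux

/-- **Corollary.**  Let `n` be odd, `a₁,…,aₙ` positive integers with `aₙ ≥ 3` (the first
`n − 1` entries form the list `as`, `aₙ = an`), and `N = a₁ + ⋯ + aₙ − 1`.  Then
`F[a₁,…,aₙ] = (1 + y_N)·F[a₁,…,a_{n−1}, aₙ − 1] − y_{N−1}·F[a₁,…,a_{n−1}, aₙ − 2]` and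
`F[a₁,…,aₙ] = (1 + y_N)·F[a₁,…,a_{n−1}] + y_{N−1} y_N·F[a₁,…,a_{n−1}, aₙ − 2]`. -/
theorem F_polynomial_recursion_odd (as : List ℕ) (an : ℕ)
    (hpos : ∀ x ∈ as, 0 < x) (han : 3 ≤ an) (hodd : Odd (as.length + 1)) :
    Fpoly (as ++ [an]) =
        (1 + MvPolynomial.X ((as ++ [an]).sum - 1)) * Fpoly (as ++ [an - 1]) -
          MvPolynomial.X ((as ++ [an]).sum - 2) * Fpoly (as ++ [an - 2]) ∧
    Fpoly (as ++ [an]) =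
        (1 + MvPolynomial.X ((as ++ [an]).sum - 1)) * Fpoly as +
          MvPolynomial.X ((as ++ [an]).sum - 2) *
            MvPolynomial.X ((as ++ [an]).sum - 1) * Fpoly (as ++ [an - 2]) := by
  have heven : Even as.length := by
    rcases hodd with ⟨t, ht⟩
    exact ⟨t, by omega⟩
  set b := as ++ [an] with hb
  set M := as.sum with hM
  have hsum : b.sum = M + an := sum_append_single as an
  have e1 : edgeIdx b (M + an - 2) = (M, M + an - 1) := by
    rw [edgeIdx_last_eq as an hpos heven (by omega) (le_refl _) (by omega)]
    congr 1
    omega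
  have e2 : edgeIdx b (M + an - 3) = (M, M + an - 2) := by
    rw [edgeIdx_last_eq as an hpos heven (by omega) (by omega) (by omega)]
    congr 1
    omega
  have r1 : Ffrom b (M + an) = Ffrom b M +
      MvPolynomial.X (M + an - 1) * Ffrom b (M + an - 1) := by
    have h := Ffrom_rec b (show 2 ≤ M + an by omega)
    rw [show M + an - 2 = M + an - 2 from rfl, e1] at h
    simp only at h
    rwa [Ioc_pred_self (show 1 ≤ M + an - 1 by omega), Finset.prod_singleton] at h
  have r2 : Ffrom b (M + an - 1) = Ffrom b M +
      MvPolynomial.X (M + an - 2) * Ffrom b (M + an - 2) := by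
    have h := Ffrom_rec b (show 2 ≤ M + an - 1 by omega)
    rw [show M + an - 1 - 2 = M + an - 3 by omega,
      show M + an - 1 - 1 = M + an - 2 by omega, e2] at h
    simp only at h
    rwa [Ioc_pred_self (show 1 ≤ M + an - 2 by omega), Finset.prod_singleton] at h
  have hA0 : Fpoly b = Ffrom b (M + an) := by
    rw [Fpoly_eq_Ffrom, hsum]
  have hA1 : Fpoly (as ++ [an - 1]) = Ffrom b (M + an - 1) := by
    rw [Fpoly_eq_Ffrom, sum_append_single, show M + (an - 1) = M + an - 1 by omega]
    refine Ffrom_congr _ fun j hj => ?_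
    refine edgeIdx_congr j fun i hi => ?_
    exact (fanIdx_append_congr as an (an - 1) (by omega) (by omega)).symm
  have hA2 : Fpoly (as ++ [an - 2]) = Ffrom b (M + an - 2) := by
    rw [Fpoly_eq_Ffrom, sum_append_single, show M + (an - 2) = M + an - 2 by omega]
    refine Ffrom_congr _ fun j hj => ?_
    refine edgeIdx_congr j fun i hi => ?_
    exact (fanIdx_append_congr as an (an - 2) (by omega) (by omega)).symm
  have hA3 : Fpoly as = Ffrom b M := by
    rw [Fpoly_eq_Ffrom]
    refine Ffrom_congr _ fun j hj => ?_
    refine edgeIdx_congr j fun i hi => ?_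
    exact (fanIdx_append_base as an (by omega)).symm
  have E1 : Fpoly b = Ffrom b M +
      MvPolynomial.X (M + an - 1) * Fpoly (as ++ [an - 1]) := by
    rw [hA0, hA1]; exact r1
  have E2 : Fpoly (as ++ [an - 1]) = Ffrom b M +
      MvPolynomial.X (M + an - 2) * Fpoly (as ++ [an - 2]) := by
    rw [hA1, hA2]; exact r2
  rw [hsum]
  constructor
  · linear_combination E1 - E2
  · linear_combination E1 + MvPolynomial.X (M + an - 1) * E2 -
      (1 + MvPolynomial.X (M + an - 1)) * hA3

end TwoBridge

end
end

section
/- Let p/q = [a_1,…,a_n] be an irreducible fraction with 0 < p/q < 1 such that p/q ≡ 1/1 or 0/1 (mod 2), i.e. p and q are both odd, or p is even and q is odd. Then t_n = +1 if the left vertex of the top triangle T_N of AT(p/q) has label ≡ 1/0 (mod 2), and t_n = −1 if the right vertex of the top triangle T_N has label ≡ 1/0 (mod 2). -/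
/-!
Ancestral triangles of continued fractions (Yamada / Farey diagrams),
following "Cluster variables and Alexander polynomials of 2-bridge knots".
-/

noncomputable section

open scoped BigOperators

attribute [local instance] Classical.propDecidable

namespace TwoBridge

/-- The unordered edge `{x, y}` is traversed by the path `γ`. -/
def onPath (γ : List ℕ) (x y : ℕ) : Prop :=
  (x, y) ∈ γ.zip γ.tail ∨ (y, x) ∈ γ.zip γ.tail

/-- The three sides of the triangle `T_m` (apex index `m + 1`, base `edgeIdx a (m−1)`). -/
def triSides (a : List ℕ) (m : ℕ) : List (ℕ × ℕ) :=
  [(m + 1, (edgeIdx a (m - 1)).1), (m + 1, (edgeIdx a (m - 1)).2),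
    ((edgeIdx a (m - 1)).1, (edgeIdx a (m - 1)).2)]

/-- The path `γ` does not go along two sides of the same triangle. -/
def NoTwoSides (a γ : List ℕ) : Prop :=
  ∀ m, 1 ≤ m → m ≤ a.sum - 1 →
    ¬ ∃ e₁ ∈ triSides a m, ∃ e₂ ∈ triSides a m,
        e₁ ≠ e₂ ∧ onPath γ e₁.1 e₁.2 ∧ onPath γ e₂.1 e₂.2

/-- The label of a vertex reduced modulo 2 (so each label becomes `0/1`, `1/1` or `1/0`). -/
def par2 (a : List ℕ) (v : ℕ) : ℕ × ℕ := ((vtxLabel a v).1 % 2, (vtxLabel a v).2 % 2)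

/-- The parity condition on the edges of the Seifert path: if `p/q ≡ 1/1 (mod 2)` it uses
only edges joining a vertex `≡ 1/1` to a vertex `≡ 1/0`; otherwise it uses only edges
joining a vertex `≡ 0/1` to a vertex `≡ 1/0`.  (The top vertex, labeled `p/q`, has index
`a.sum`.) -/
def SeifertParity (a γ : List ℕ) : Prop :=
  if par2 a a.sum = (1, 1) then
    List.Chain'
      (fun u w => (par2 a u = (1, 1) ∧ par2 a w = (1, 0)) ∨
        (par2 a u = (1, 0) ∧ par2 a w = (1, 1))) γ
  else
    List.Chain'
      (fun u w => (par2 a u = (0, 1) ∧ par2 a w = (1, 0)) ∨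
        (par2 a u = (1, 0) ∧ par2 a w = (0, 1))) γ

/-- `γ` is the Seifert path of the ancestral triangle of `a`: a path from the top vertex
that never goes along two sides of the same triangle and satisfies the parity condition. -/
def IsSeifert (a γ : List ℕ) : Prop :=
  IsPathFrom a a.sum γ ∧ NoTwoSides a γ ∧ SeifertParity a γ

/-- The bottom edge of `Fan_k` (`k ≥ 2`), i.e. the edge shared by `Fan_k` and `Fan_{k−1}`
(the base edge of the first triangle `T_{l_{k−1}}` of `Fan_k`), lies on the path `γ`. -/
def bottomEdgeOn (a γ : List ℕ) (k : ℕ) : Prop :=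
  onPath γ (edgeIdx a ((a.take (k - 1)).sum - 1)).1
    (edgeIdx a ((a.take (k - 1)).sum - 1)).2

/-- The signs `t_k ∈ {±1}` computed from the Seifert path `γ`:
`t₁ = +1` if `p/q ≡ 1/0` or `0/1 (mod 2)` and `t₁ = −1` if `p/q ≡ 1/1 (mod 2)`; and for
`2 ≤ k`, `t_k = −t_{k−1}` if the bottom edge of `Fan_k` lies on `γ`, `t_k = t_{k−1}`
otherwise. -/
def tsgn (a γ : List ℕ) : ℕ → ℤ
  | 0 => 1
  | 1 => if par2 a a.sum = (1, 1) then -1 else 1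
  | k + 2 => (if bottomEdgeOn a γ (k + 2) then -1 else 1) * tsgn a γ (k + 1)

/-- `Fan_k` lies on the left side of the path `γ`. -/
def FanLeft (a γ : List ℕ) (k : ℕ) : Prop :=
  ∀ j, 1 ≤ j → j ≤ a.sum - 1 → fanIdx a j = k → j ∈ pathLeftSet a γ

/-- The position of the triangle `T_j` inside its fan, counted from the bottom
(so `T_j = T_i^{(k)}` with `k = fanIdx a j` and `i = posInFan a j`). -/
def posInFan (a : List ℕ) (j : ℕ) : ℕ :=
  if fanIdx a j = 1 then j else j - (a.take (fanIdx a j - 1)).sum + 1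

/-- The sign `e_i = e(T_i^{(k)})` of a triangle, computed from the Seifert path `γ`:
`(−1)^i` if the bottom edge of `Fan_k` lies on `γ`; otherwise, for `k` odd, `+1` if
`Fan_k` is on the left side of `γ` and `(−1)^{i−1}` if on the right side, and for `k`
even, `+1` if `Fan_k` is on the right side and `(−1)^{i−1}` if on the left side. -/
def esgn (a γ : List ℕ) (j : ℕ) : ℤ :=
  if bottomEdgeOn a γ (fanIdx a j) then (-1) ^ posInFan a j
  else if Odd (fanIdx a j) then
    (if FanLeft a γ (fanIdx a j) then 1 else (-1) ^ (posInFan a j - 1))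
  else (if FanLeft a γ (fanIdx a j) then (-1) ^ (posInFan a j - 1) else 1)

/-- The quantity `d(k)` (taking the first applicable case): `a_k − 1` if `k` is odd and
`t_k = −1` or `k` is even and `t_k = +1`; `t_k` if the bottom edge of `Fan_k` lies on the
Seifert path; and `1` otherwise. -/
def dval (a γ : List ℕ) (k : ℕ) : ℤ :=
  if (Odd k ∧ tsgn a γ k = -1) ∨ (Even k ∧ tsgn a γ k = 1) then (a.getD (k - 1) 0 : ℤ) - 1
  else if bottomEdgeOn a γ k then tsgn a γ k
  else 1

/-- `Σ_{k=1}^n d(k)`, so that `d = −(1/2) · dsum`. -/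
def dsum (a γ : List ℕ) : ℤ := ∑ k ∈ Finset.Icc 1 a.length, dval a γ k

/-! ### Auxiliary development -/

/-- Convergent pairs `(A_{k-1}, A_k)`, consuming the list from the back. -/
def convR : List ℕ → (ℕ × ℕ) × (ℕ × ℕ)
  | [] => ((1, 0), (0, 1))
  | b :: r => ((convR r).2,
      (b * (convR r).2.1 + (convR r).1.1, b * (convR r).2.2 + (convR r).1.2))

def conv (l : List ℕ) : (ℕ × ℕ) × (ℕ × ℕ) := convR l.reverse

theorem conv_nil : conv [] = ((1, 0), (0, 1)) := rfl

theorem conv_snoc (l : List ℕ) (b : ℕ) :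
    conv (l ++ [b]) = ((conv l).2,
      (b * (conv l).2.1 + (conv l).1.1, b * (conv l).2.2 + (conv l).1.2)) := by
  simp [conv, List.reverse_append, convR]

theorem conv_det (l : List ℕ) :
    ((conv l).1.1 * (conv l).2.2 : ℤ) - (conv l).2.1 * (conv l).1.2 = 1 ∨
    ((conv l).1.1 * (conv l).2.2 : ℤ) - (conv l).2.1 * (conv l).1.2 = -1 := by
  suffices h : ∀ r : List ℕ, ((convR r).1.1 * (convR r).2.2 : ℤ) - (convR r).2.1 * (convR r).1.2 = 1 ∨
      ((convR r).1.1 * (convR r).2.2 : ℤ) - (convR r).2.1 * (convR r).1.2 = -1 from h _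
  intro r
  induction r with
  | nil => left; norm_num [convR]
  | cons b r ih =>
    rcases ih with h | h
    · right; simp only [convR]; push_cast; linear_combination -h
    · left; simp only [convR]; push_cast; linear_combination -h

theorem conv_den_pos (l : List ℕ) (h : ∀ x ∈ l, 0 < x) : 0 < (conv l).2.2 := by
  suffices hh : ∀ r : List ℕ, (∀ x ∈ r, 0 < x) → 0 < (convR r).2.2 by
    exact hh _ (by simpa using h)
  intro r hr
  induction r with
  | nil => norm_num [convR]
  | cons b r ih =>
    have hb : 0 < b := hr b (by simp)
    have := ih (fun x hx => hr x (by simp [hx]))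
    simp only [convR]
    have : 1 ≤ b * (convR r).2.2 := Nat.one_le_iff_ne_zero.2 (by positivity)
    omega

def genCF : List ℕ → ℚ → ℚ
  | [], x => x
  | b :: t, x => 1 / (b + genCF t x)

theorem cf_eq_genCF (l : List ℕ) : cf l = genCF l 0 := by
  induction l with
  | nil => simp [cf, genCF]
  | cons b t ih => simp [cf, genCF, ih]

theorem genCF_snoc (l : List ℕ) (b : ℕ) (x : ℚ) :
    genCF (l ++ [b]) x = genCF l (1 / (b + x)) := by
  induction l with
  | nil => simp [genCF]
  | cons c t ih => simp [genCF, ih]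

theorem genCF_eq (l : List ℕ) (h : ∀ x ∈ l, 0 < x) (x : ℚ) (hx : 0 ≤ x) :
    (0 : ℚ) < ((conv l).2.2 + x * (conv l).1.2) ∧
    genCF l x = ((conv l).2.1 + x * (conv l).1.1) / ((conv l).2.2 + x * (conv l).1.2) := by
  induction l using List.reverseRecOn generalizing x with
  | nil => simp [conv_nil, genCF]
  | append_singleton l b ih =>
    have hb : 0 < b := h b (by simp)
    have hb' : (0:ℚ) < (b:ℚ) + x := by
      have : (1:ℚ) ≤ (b:ℚ) := by exact_mod_cast hb
      linarith
    have hx' : (0:ℚ) ≤ 1 / ((b:ℚ) + x) := by positivity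
    obtain ⟨hpos, heq⟩ := ih (fun y hy => h y (by simp [hy])) (1 / ((b:ℚ) + x)) hx'
    set C := (conv l).2 with hC
    set P := (conv l).1 with hP
    rw [conv_snoc]
    constructor
    · have h2 : ((C.2:ℚ) + 1 / ((b:ℚ) + x) * P.2) * ((b:ℚ) + x)
          = ((b * C.2 + P.2 : ℕ) : ℚ) + x * C.2 := by
        field_simp; push_cast; ring
      have := mul_pos hpos hb'
      rw [h2] at this
      simpa using this
    · rw [genCF_snoc, heq]
      have h2 : ((C.2:ℚ) + 1 / ((b:ℚ) + x) * P.2) * ((b:ℚ) + x)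
          = ((b * C.2 + P.2 : ℕ) : ℚ) + x * C.2 := by field_simp; push_cast; ring
      have h1 : ((C.1:ℚ) + 1 / ((b:ℚ) + x) * P.1) * ((b:ℚ) + x)
          = ((b * C.1 + P.1 : ℕ) : ℚ) + x * C.1 := by field_simp; push_cast; ring
      rw [← h1, ← h2, mul_div_mul_right _ _ (ne_of_gt hb')]


theorem ell_zero (a : List ℕ) : ell a 0 = 0 := rfl

theorem take_succ_getD (a : List ℕ) (m : ℕ) (h : m < a.length) :
    a.take (m + 1) = a.take m ++ [a.getD m 0] := by
  rw [List.take_succ]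
  simp [List.getD_eq_getElem?_getD, List.getElem?_eq_getElem h]

theorem ell_succ (a : List ℕ) (m : ℕ) (h : m < a.length) :
    ell a (m + 1) = ell a m + a.getD m 0 := by
  unfold ell; rw [take_succ_getD a m h]; simp

theorem ell_succ_of_le (a : List ℕ) (m : ℕ) (h : a.length ≤ m) :
    ell a (m + 1) = ell a m := by
  unfold ell
  rw [List.take_of_length_le h, List.take_of_length_le (le_trans h (Nat.le_succ m))]

theorem ell_mono (a : List ℕ) {j k : ℕ} (h : j ≤ k) : ell a j ≤ ell a k := by
  induction k with
  | zero => simpa [Nat.le_zero.1 h] using le_refl _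
  | succ k ih =>
    rcases Nat.eq_or_lt_of_le h with rfl | h'
    · exact le_refl _
    · have h2 := ih (Nat.lt_succ_iff.1 h')
      rcases Nat.lt_or_ge k a.length with hk | hk
      · rw [ell_succ a k hk]; omega
      · rw [ell_succ_of_le a k hk]; exact h2

theorem ell_length (a : List ℕ) : ell a a.length = a.sum := by
  unfold ell; simp

theorem getD_pos (a : List ℕ) (hpos : ∀ x ∈ a, 0 < x) {m : ℕ} (h : m < a.length) :
    0 < a.getD m 0 := by
  rw [List.getD_eq_getElem?_getD, List.getElem?_eq_getElem h]
  exact hpos _ (List.getElem_mem h)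

theorem ell_strict (a : List ℕ) (hpos : ∀ x ∈ a, 0 < x) {m : ℕ} (h : m < a.length) :
    ell a m < ell a (m + 1) := by
  rw [ell_succ a m h]
  have := getD_pos a hpos h
  omega

theorem ell_pos (a : List ℕ) (hpos : ∀ x ∈ a, 0 < x) {m : ℕ} (h1 : 1 ≤ m)
    (h2 : m ≤ a.length) : 0 < ell a m := by
  have hl : 0 < a.length := by omega
  have ha : ell a 0 < ell a 1 := ell_strict a hpos hl
  have hb : ell a 1 ≤ ell a m := ell_mono a h1
  simp only [ell_zero] at ha
  omega

theorem fanIdx_eq (a : List ℕ) {i k : ℕ} (hk : 1 ≤ k)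
    (h1 : ell a (k - 1) ≤ i) (h2 : i < ell a k) : fanIdx a i = k := by
  unfold fanIdx
  have hmem : k ∈ {m | i < ell a m} := h2
  refine le_antisymm (Nat.sInf_le hmem) ?_
  by_contra hc
  push_neg at hc
  have hin := Nat.sInf_mem (⟨k, hmem⟩ : {m | i < ell a m}.Nonempty)
  have h3 : ell a (sInf {m | i < ell a m}) ≤ ell a (k - 1) := ell_mono a (by omega)
  have h4 : i < ell a (sInf {m | i < ell a m}) := hin
  omega

theorem isRight_iff (a : List ℕ) {i k : ℕ} (hk : 1 ≤ k)
    (h1 : ell a (k - 1) ≤ i) (h2 : i < ell a k) : (isRight a i ↔ Odd k) := by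
  unfold isRight; rw [fanIdx_eq a hk h1 h2]

theorem conv_take_succ (a : List ℕ) (m : ℕ) (h : m < a.length) :
    conv (a.take (m + 1)) = ((conv (a.take m)).2,
      (a.getD m 0 * (conv (a.take m)).2.1 + (conv (a.take m)).1.1,
       a.getD m 0 * (conv (a.take m)).2.2 + (conv (a.take m)).1.2)) := by
  rw [take_succ_getD a m h, conv_snoc]

/-- Explicit description of the active edges and labels within fans. -/
theorem struct (a : List ℕ) (hpos : ∀ x ∈ a, 0 < x) :
    ∀ i k, 1 ≤ k → k ≤ a.length → ell a (k - 1) ≤ i → i < ell a k →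
    edgeIdx a i = (if Odd k then (ell a (k - 1), i + 1) else (i + 1, ell a (k - 1))) ∧
    edgeLbl a i = (if Odd k then
        ((conv (a.take (k - 1))).2,
         ((i + 1 - ell a (k - 1)) * (conv (a.take (k - 1))).2.1 + (conv (a.take (k - 1))).1.1,
          (i + 1 - ell a (k - 1)) * (conv (a.take (k - 1))).2.2 + (conv (a.take (k - 1))).1.2))
      else
        (((i + 1 - ell a (k - 1)) * (conv (a.take (k - 1))).2.1 + (conv (a.take (k - 1))).1.1,
          (i + 1 - ell a (k - 1)) * (conv (a.take (k - 1))).2.2 + (conv (a.take (k - 1))).1.2),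
         (conv (a.take (k - 1))).2)) := by
  intro i
  induction i using Nat.strong_induction_on with
  | _ i IH =>
    intro k hk1 hklen hlow hhigh
    match i, hlow, hhigh with
    | 0, hlow, hhigh =>
      have hk : k = 1 := by
        by_contra hne
        have : 0 < ell a (k - 1) := ell_pos a hpos (by omega) (by omega)
        omega
      subst hk
      rw [if_pos odd_one, if_pos odd_one]
      constructor
      · show edgeIdx a 0 = _
        simp [edgeIdx, ell_zero]
      · show edgeLbl a 0 = _
        simp [edgeLbl, conv, convR, ell_zero]
    | (j + 1), hlow, hhigh =>
      have hir : isRight a (j + 1) ↔ Odd k := isRight_iff a hk1 hlow hhigh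
      rcases Nat.lt_or_ge j (ell a (k - 1)) with hb | hb
      · -- boundary case : j + 1 = ell a (k-1), first triangle of fan k
        have hk2 : 2 ≤ k := by
          by_contra hc
          have hke : k = 1 := by omega
          subst hke
          simp only [Nat.sub_self, ell_zero] at hb
          omega
        have hj1 : j + 1 = ell a (k - 1) := by omega
        have hstep : ell a (k - 2) < ell a (k - 1) := by
          have h1 : ell a (k - 2) < ell a (k - 2 + 1) := ell_strict a hpos (by omega)
          have h2 : k - 2 + 1 = k - 1 := by omega
          rwa [h2] at h1
        have hco : k - 1 - 1 = k - 2 := by omega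
        obtain ⟨hE, hL⟩ := IH j (by omega) (k - 1) (by omega) (by omega)
          (by rw [hco]; omega) (by omega)
        rw [hco] at hE hL
        have hpar : Odd k ↔ ¬ Odd (k - 1) := by
          rw [Nat.odd_iff, Nat.odd_iff]; omega
        have hconv : conv (a.take (k - 1)) = ((conv (a.take (k - 2))).2,
            (a.getD (k - 2) 0 * (conv (a.take (k - 2))).2.1 + (conv (a.take (k - 2))).1.1,
             a.getD (k - 2) 0 * (conv (a.take (k - 2))).2.2 + (conv (a.take (k - 2))).1.2)) := by
          have h3 : k - 1 = (k - 2) + 1 := by omega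
          rw [h3, conv_take_succ a (k - 2) (by omega)]
        have hell : ell a (k - 1) = ell a (k - 2) + a.getD (k - 2) 0 := by
          have h3 : k - 1 = (k - 2) + 1 := by omega
          rw [h3, ell_succ a (k - 2) (by omega)]
        have hm : j + 1 - ell a (k - 2) = a.getD (k - 2) 0 := by omega
        have hX : j + 1 + 1 - ell a (k - 1) = 1 := by omega
        rcases Nat.even_or_odd k with hev | hod
        · -- k even, fan k is left, fan k-1 right
          have hOk : ¬ Odd k := by simpa [Nat.even_iff, Nat.odd_iff] using hev
          have hOk1 : Odd (k - 1) := by by_contra h; exact hOk (hpar.2 h)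
          rw [if_pos hOk1] at hE hL
          rw [if_neg hOk, if_neg hOk]
          have hnr : ¬ isRight a (j + 1) := fun h => hOk (hir.1 h)
          constructor
          · show edgeIdx a (j + 1) = _
            simp only [edgeIdx, if_neg hnr]
            rw [hE]
            simp only [Prod.mk.injEq, and_true, true_and] <;> omega
          · show edgeLbl a (j + 1) = _
            simp only [edgeLbl, if_neg hnr]
            rw [hL, hconv, hX, hm]
            simp only [Prod.mk.injEq] <;> (repeat' apply And.intro) <;> grind
        · -- k odd, fan k is right, fan k-1 left
          have hOk1 : ¬ Odd (k - 1) := hpar.1 hod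
          rw [if_neg hOk1] at hE hL
          rw [if_pos hod, if_pos hod]
          have hr : isRight a (j + 1) := hir.2 hod
          constructor
          · show edgeIdx a (j + 1) = _
            simp only [edgeIdx, if_pos hr]
            rw [hE]
            simp only [Prod.mk.injEq, and_true, true_and] <;> omega
          · show edgeLbl a (j + 1) = _
            simp only [edgeLbl, if_pos hr]
            rw [hL, hconv, hX, hm]
            simp only [Prod.mk.injEq] <;> (repeat' apply And.intro) <;> grind
      · -- interior case
        obtain ⟨hE, hL⟩ := IH j (by omega) k hk1 hklen hb (by omega)
        have hY : j + 1 + 1 - ell a (k - 1) = (j + 1 - ell a (k - 1)) + 1 := by omega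
        rcases Nat.even_or_odd k with hev | hod
        · have hOk : ¬ Odd k := by simpa [Nat.even_iff, Nat.odd_iff] using hev
          rw [if_neg hOk] at hE hL
          rw [if_neg hOk, if_neg hOk]
          have hnr : ¬ isRight a (j + 1) := fun h => hOk (hir.1 h)
          constructor
          · show edgeIdx a (j + 1) = _
            simp only [edgeIdx, if_neg hnr]
            rw [hE]
          · show edgeLbl a (j + 1) = _
            simp only [edgeLbl, if_neg hnr]
            rw [hL, hY]
            simp only [Prod.mk.injEq] <;> (repeat' apply And.intro) <;> grind
        · rw [if_pos hod] at hE hL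
          rw [if_pos hod, if_pos hod]
          have hr : isRight a (j + 1) := hir.2 hod
          constructor
          · show edgeIdx a (j + 1) = _
            simp only [edgeIdx, if_pos hr]
            rw [hE]
          · show edgeLbl a (j + 1) = _
            simp only [edgeLbl, if_pos hr]
            rw [hL, hY]
            simp only [Prod.mk.injEq] <;> (repeat' apply And.intro) <;> grind


theorem vtx0 (a : List ℕ) : vtxLabel a 0 = (0, 1) := rfl

theorem vtx1 (a : List ℕ) : vtxLabel a 1 = (1, 1) := rfl

theorem vtx2 (a : List ℕ) {v : ℕ} (h : 2 ≤ v) :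
    vtxLabel a v = ((edgeLbl a (v - 2)).1.1 + (edgeLbl a (v - 2)).2.1,
      (edgeLbl a (v - 2)).1.2 + (edgeLbl a (v - 2)).2.2) := by
  unfold vtxLabel
  rw [if_neg (by omega), if_neg (by omega)]

/-- Labels of the apex vertices within fan `k`. -/
theorem vtx_fan (a : List ℕ) (hpos : ∀ x ∈ a, 0 < x) {k m : ℕ} (hk1 : 1 ≤ k)
    (hk : k ≤ a.length) (hm1 : 1 ≤ m) (hm : ell a (k - 1) + m ≤ ell a k) :
    vtxLabel a (ell a (k - 1) + m) =
      (m * (conv (a.take (k - 1))).2.1 + (conv (a.take (k - 1))).1.1,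
       m * (conv (a.take (k - 1))).2.2 + (conv (a.take (k - 1))).1.2) := by
  rcases Nat.lt_or_ge (ell a (k - 1) + m) 2 with hv | hv
  · -- vertex is 1 (cannot be 0)
    have h1 : ell a (k - 1) = 0 ∧ m = 1 := by omega
    have hkk : k = 1 := by
      by_contra hne
      have : 0 < ell a (k - 1) := ell_pos a hpos (by omega) (by omega)
      omega
    subst hkk
    rw [h1.1, h1.2]
    simp [vtx1, conv, convR]
  · rw [vtx2 a hv]
    rcases Nat.lt_or_ge m 2 with hm2 | hm2
    · -- m = 1 ; base edge of the fan, previous fan's top edge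
      have hm1' : m = 1 := by omega
      subst hm1'
      have hk2 : 2 ≤ k := by
        by_contra hne
        have hkk : k = 1 := by omega
        subst hkk
        simp only [Nat.sub_self, ell_zero] at hv
        omega
      have hstep : ell a (k - 2) < ell a (k - 1) := by
        have h1 : ell a (k - 2) < ell a (k - 2 + 1) := ell_strict a hpos (by omega)
        have h2 : k - 2 + 1 = k - 1 := by omega
        rwa [h2] at h1
      have hco : k - 1 - 1 = k - 2 := by omega
      obtain ⟨-, hL⟩ := struct a hpos (ell a (k - 1) + 1 - 2) (k - 1) (by omega) (by omega)
        (by rw [hco]; omega) (by omega)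
      rw [hco] at hL
      have hell : ell a (k - 1) = ell a (k - 2) + a.getD (k - 2) 0 := by
        have h3 : k - 1 = (k - 2) + 1 := by omega
        rw [h3, ell_succ a (k - 2) (by omega)]
      have hconv : conv (a.take (k - 1)) = ((conv (a.take (k - 2))).2,
          (a.getD (k - 2) 0 * (conv (a.take (k - 2))).2.1 + (conv (a.take (k - 2))).1.1,
           a.getD (k - 2) 0 * (conv (a.take (k - 2))).2.2 + (conv (a.take (k - 2))).1.2)) := by
        have h3 : k - 1 = (k - 2) + 1 := by omega
        rw [h3, conv_take_succ a (k - 2) (by omega)]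
      have hmm : ell a (k - 1) + 1 - 2 + 1 - ell a (k - 2) = a.getD (k - 2) 0 := by omega
      rw [hmm] at hL
      rw [hL, hconv]
      rcases Nat.even_or_odd (k - 1) with hev | hod
      · rw [if_neg (by simpa [Nat.even_iff, Nat.odd_iff] using hev)]
        simp only [Prod.mk.injEq] <;> (repeat' apply And.intro) <;> ring
      · rw [if_pos hod]
        simp only [Prod.mk.injEq] <;> (repeat' apply And.intro) <;> ring
    · -- m ≥ 2 : interior of fan k
      obtain ⟨-, hL⟩ := struct a hpos (ell a (k - 1) + m - 2) k hk1 hk (by omega) (by omega)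
      have hmm : ell a (k - 1) + m - 2 + 1 - ell a (k - 1) = m - 1 := by omega
      rw [hmm] at hL
      rw [hL]
      have hm' : m = (m - 1) + 1 := by omega
      rcases Nat.even_or_odd k with hev | hod
      · rw [if_neg (by simpa [Nat.even_iff, Nat.odd_iff] using hev)]
        conv_rhs => rw [hm']
        simp only [Prod.mk.injEq] <;> (repeat' apply And.intro) <;> ring
      · rw [if_pos hod]
        conv_rhs => rw [hm']
        simp only [Prod.mk.injEq] <;> (repeat' apply And.intro) <;> ring

/-- The label of the top vertex of fan `k`. -/
theorem lab_ell (a : List ℕ) (hpos : ∀ x ∈ a, 0 < x) {k : ℕ} (hk : k ≤ a.length) :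
    vtxLabel a (ell a k) = (conv (a.take k)).2 := by
  rcases Nat.eq_zero_or_pos k with rfl | hk1
  · simp [ell_zero, vtx0, conv, convR]
  · have hco : k = (k - 1) + 1 := by omega
    have hell : ell a k = ell a (k - 1) + a.getD (k - 1) 0 := by
      rw (occs := .pos [1]) [hco]
      rw [ell_succ a (k - 1) (by omega)]
    have hg : 0 < a.getD (k - 1) 0 := getD_pos a hpos (by omega)
    rw [hell, vtx_fan a hpos hk1 hk hg (by omega)]
    have hconv : conv (a.take k) = ((conv (a.take (k - 1))).2,
        (a.getD (k - 1) 0 * (conv (a.take (k - 1))).2.1 + (conv (a.take (k - 1))).1.1,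
         a.getD (k - 1) 0 * (conv (a.take (k - 1))).2.2 + (conv (a.take (k - 1))).1.2)) := by
      rw (occs := .pos [1]) [hco]
      rw [conv_take_succ a (k - 1) (by omega)]
    rw [hconv]

/-- Global invariant: labels of the active edge are the labels of its endpoints, and
denominators are positive. -/
theorem ginv (a : List ℕ) : ∀ i,
    (edgeLbl a i).1 = vtxLabel a ((edgeIdx a i).1) ∧
    (edgeLbl a i).2 = vtxLabel a ((edgeIdx a i).2) ∧
    1 ≤ (edgeLbl a i).1.2 ∧ 1 ≤ (edgeLbl a i).2.2 := by
  intro i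
  induction i with
  | zero => exact ⟨rfl, rfl, le_refl _, le_refl _⟩
  | succ i ih =>
    obtain ⟨h1, h2, h3, h4⟩ := ih
    have hnew : vtxLabel a (i + 2) = ((edgeLbl a i).1.1 + (edgeLbl a i).2.1,
        (edgeLbl a i).1.2 + (edgeLbl a i).2.2) := by
      rw [vtx2 a (by omega)]
      simp
    by_cases hr : isRight a (i + 1)
    · simp only [edgeIdx, edgeLbl, if_pos hr]
      refine ⟨h1, ?_, h3, by omega⟩
      rw [hnew]
    · simp only [edgeIdx, edgeLbl, if_neg hr]
      refine ⟨?_, h2, by omega, h4⟩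
      rw [hnew]

theorem den_lt (a : List ℕ) {u w : ℕ} (hw2 : 2 ≤ w)
    (hu : u = (edgeIdx a (w - 2)).1 ∨ u = (edgeIdx a (w - 2)).2) :
    (vtxLabel a u).2 < (vtxLabel a w).2 := by
  obtain ⟨h1, h2, h3, h4⟩ := ginv a (w - 2)
  rw [vtx2 a hw2]
  rcases hu with rfl | rfl
  · rw [← h1]; simp; omega
  · rw [← h2]; simp; omega

/-- Any step of a path goes from the apex of a triangle to one of its base vertices. -/
theorem step_char (a : List ℕ) {u w : ℕ} (h : IsStep a u w) :
    2 ≤ u ∧ (w = (edgeIdx a (u - 2)).1 ∨ w = (edgeIdx a (u - 2)).2) := by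
  obtain ⟨hedge, hden⟩ := h
  rcases hedge with ⟨rfl, rfl⟩ | ⟨rfl, rfl⟩ | ⟨hu2, hw⟩ | ⟨hw2, hu⟩
  · simp [vtx0, vtx1] at hden
  · simp [vtx0, vtx1] at hden
  · exact ⟨hu2, hw⟩
  · exact absurd hden (by have := den_lt a hw2 hu; omega)


/-- Componentwise sum mod 2 of parity pairs. -/
def px (u v : ℕ × ℕ) : ℕ × ℕ := ((u.1 + v.1) % 2, (u.2 + v.2) % 2)

theorem par2_lt (a : List ℕ) (v : ℕ) : (par2 a v).1 < 2 ∧ (par2 a v).2 < 2 := by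
  simp only [par2]
  omega

theorem edge_det (a : List ℕ) : ∀ i,
    ((edgeLbl a i).1.1 * (edgeLbl a i).2.2 : ℤ) - (edgeLbl a i).2.1 * (edgeLbl a i).1.2 = 1 ∨
    ((edgeLbl a i).1.1 * (edgeLbl a i).2.2 : ℤ) - (edgeLbl a i).2.1 * (edgeLbl a i).1.2 = -1 := by
  intro i
  induction i with
  | zero => right; norm_num [edgeLbl]
  | succ i ih =>
    by_cases hr : isRight a (i + 1) <;>
      [simp only [edgeLbl, if_pos hr]; simp only [edgeLbl, if_neg hr]] <;>
      rcases ih with h | h <;> [left; right; left; right] <;> push_cast <;> linear_combination h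

theorem edge_det_odd (a : List ℕ) (i : ℕ) :
    ((edgeLbl a i).1.1 * (edgeLbl a i).2.2 + (edgeLbl a i).2.1 * (edgeLbl a i).1.2) % 2 = 1 := by
  rcases edge_det a i with h | h <;>
  · zify
    push_cast
    omega

theorem parity_cases {x1 x2 y1 y2 : ℕ} (h : (x1 * y2 + y1 * x2) % 2 = 1) :
    ¬(x1 % 2 = y1 % 2 ∧ x2 % 2 = y2 % 2) ∧ ¬(x1 % 2 = 0 ∧ x2 % 2 = 0) ∧
      ¬(y1 % 2 = 0 ∧ y2 % 2 = 0) := by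
  have hm : (x1 % 2 * (y2 % 2) + y1 % 2 * (x2 % 2)) % 2 = 1 := by
    conv_rhs => rw [← h]
    conv_rhs => rw [Nat.add_mod, Nat.mul_mod x1 y2, Nat.mul_mod y1 x2]
    rw [Nat.add_mod]
  rcases Nat.mod_two_eq_zero_or_one x1 with h1 | h1 <;>
    rcases Nat.mod_two_eq_zero_or_one x2 with h2 | h2 <;>
      rcases Nat.mod_two_eq_zero_or_one y1 with h3 | h3 <;>
        rcases Nat.mod_two_eq_zero_or_one y2 with h4 | h4 <;>
          rw [h1, h2, h3, h4] at hm <;> simp_all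

/-- The parities of the endpoints of any active edge are distinct and nonzero. -/
theorem par_distinct (a : List ℕ) (i : ℕ) :
    par2 a ((edgeIdx a i).1) ≠ par2 a ((edgeIdx a i).2) ∧
    par2 a ((edgeIdx a i).1) ≠ (0, 0) ∧ par2 a ((edgeIdx a i).2) ≠ (0, 0) := by
  obtain ⟨h1, h2, -, -⟩ := ginv a i
  obtain ⟨hd, hz1, hz2⟩ := parity_cases (edge_det_odd a i)
  simp only [par2, ← h1, ← h2, Ne, Prod.mk.injEq]
  exact ⟨fun h => hd ⟨h.1, h.2⟩, fun h => hz1 ⟨h.1, h.2⟩, fun h => hz2 ⟨h.1, h.2⟩⟩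

/-- The parity of an apex is the sum of the parities of its base. -/
theorem apex_par (a : List ℕ) (i : ℕ) :
    par2 a (i + 2) = px (par2 a ((edgeIdx a i).1)) (par2 a ((edgeIdx a i).2)) := by
  obtain ⟨h1, h2, -, -⟩ := ginv a i
  rw [show (i + 2 : ℕ) = i + 2 from rfl]
  have hv := vtx2 a (v := i + 2) (by omega)
  simp only [Nat.add_sub_cancel] at hv
  simp only [par2, hv, px, ← h1, ← h2]
  simp only [Prod.mk.injEq]
  exact ⟨Nat.add_mod _ _ _, Nat.add_mod _ _ _⟩

theorem zip_tail_mem {x y : ℕ} {δ γ : List ℕ} (h : (x :: y :: δ) <:+ γ) :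
    (x, y) ∈ γ.zip γ.tail := by
  obtain ⟨pre, rfl⟩ := h
  induction pre with
  | nil => simp
  | cons p pre ih =>
    have hne : pre ++ x :: y :: δ ≠ [] := by simp
    obtain ⟨q, t, hqt⟩ := List.exists_cons_of_ne_nil hne
    simp only [List.cons_append, hqt, List.tail_cons, List.zip_cons_cons]
    rw [hqt] at ih
    exact List.mem_cons_of_mem _ (by simpa using ih)

theorem chain'_pair {R : ℕ → ℕ → Prop} {x y : ℕ} {δ γ : List ℕ}
    (hc : List.Chain' R γ) (h : (x :: y :: δ) <:+ γ) : R x y := by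
  obtain ⟨pre, rfl⟩ := h
  have := (List.isChain_append.1 hc).2.1
  exact (List.isChain_cons_cons.1 this).1

theorem getLast?_of_suffix {δ γ : List ℕ} (h : δ <:+ γ) (hne : δ ≠ []) :
    γ.getLast? = δ.getLast? := by
  obtain ⟨pre, rfl⟩ := h
  rw [List.getLast?_append]
  cases h' : δ.getLast? with
  | none => exact absurd (List.getLast?_eq_none_iff.1 h') hne
  | some y => simp

theorem last_pair {R : ℕ → ℕ → Prop} {v h0 : ℕ} {γ : List ℕ}
    (hc : List.Chain' R γ) (h : [v] <:+ γ) (hhead : γ.head? = some h0) (hne : h0 ≠ v) :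
    ∃ u, R u v := by
  obtain ⟨pre, rfl⟩ := h
  rcases pre.eq_nil_or_concat with rfl | ⟨l, b, rfl⟩
  · simp at hhead
    exact absurd hhead (Ne.symm hne)
  · refine ⟨b, ?_⟩
    have h2 := (List.isChain_append.1 hc).2.2
    apply h2 b _ v rfl
    simp


/-- The edge-parity condition along the Seifert path. -/
def GoodP (a : List ℕ) (t : ℕ × ℕ) (u w : ℕ) : Prop :=
  (par2 a u = t ∧ par2 a w = (1, 0)) ∨ (par2 a u = (1, 0) ∧ par2 a w = t)

/-- The parity of `v` belongs to the allowed classes `{t, 1/0}`. -/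
def InCl (a : List ℕ) (t : ℕ × ℕ) (v : ℕ) : Prop :=
  par2 a v = t ∨ par2 a v = (1, 0)

theorem goodP_fst {a : List ℕ} {t : ℕ × ℕ} {u w : ℕ} (h : GoodP a t u w) : InCl a t u := by
  rcases h with ⟨h1, -⟩ | ⟨h1, -⟩
  · exact Or.inl h1
  · exact Or.inr h1

theorem goodP_snd {a : List ℕ} {t : ℕ × ℕ} {u w : ℕ} (h : GoodP a t u w) : InCl a t w := by
  rcases h with ⟨-, h1⟩ | ⟨-, h1⟩
  · exact Or.inr h1
  · exact Or.inl h1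

theorem px_ne {A B : ℕ × ℕ} (hA2 : A.1 < 2 ∧ A.2 < 2) (hB2 : B.1 < 2 ∧ B.2 < 2)
    (hA0 : A ≠ (0, 0)) (hB0 : B ≠ (0, 0)) : px A B ≠ A ∧ px A B ≠ B := by
  rcases A with ⟨a1, a2⟩
  rcases B with ⟨b1, b2⟩
  simp only [px, Ne, Prod.mk.injEq, not_and] at *
  omega

/-- The three vertices of a triangle cannot all have parities among the two allowed
classes. -/
theorem tri_contra (a : List ℕ) (t : ℕ × ℕ) (i : ℕ) {x y z : ℕ}
    (hx : x = (edgeIdx a i).1) (hy : y = (edgeIdx a i).2) (hz : z = i + 2)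
    (h1 : InCl a t x) (h2 : InCl a t y) (h3 : InCl a t z) : False := by
  subst hx hy hz
  obtain ⟨hAB, hA0, hB0⟩ := par_distinct a i
  have hC := apex_par a i
  obtain ⟨hCA, hCB⟩ := px_ne (par2_lt a (edgeIdx a i).1) (par2_lt a (edgeIdx a i).2) hA0 hB0
  rw [← hC] at hCA hCB
  unfold InCl at h1 h2 h3
  rcases h1 with h1 | h1 <;> rcases h2 with h2 | h2 <;> rcases h3 with h3 | h3 <;>
    first
      | exact hAB (h1.trans h2.symm)
      | exact hCA (h3.trans h1.symm)
      | exact hCB (h3.trans h2.symm)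

theorem succ_of_suffix {γ δ : List ℕ} {v : ℕ}
    (hlast : γ.getLast? = some 0 ∨ γ.getLast? = some 1)
    (hsfx : (v :: δ) <:+ γ) (hv : 2 ≤ v) : ∃ w δ', (v :: w :: δ') <:+ γ := by
  cases δ with
  | nil =>
    have hl := getLast?_of_suffix hsfx (by simp)
    simp only [List.getLast?_singleton] at hl
    rcases hlast with h | h <;> rw [hl] at h <;> simp at h <;> omega
  | cons w δ' => exact ⟨w, δ', hsfx⟩

theorem par_in_cl {a γ : List ℕ} {t : ℕ × ℕ} {v h0 : ℕ} {δ : List ℕ}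
    (hchain : List.Chain' (GoodP a t) γ) (hhead : γ.head? = some h0) (h2 : 2 ≤ h0)
    (hlast : γ.getLast? = some 0 ∨ γ.getLast? = some 1)
    (hsfx : (v :: δ) <:+ γ) : InCl a t v := by
  cases δ with
  | cons w δ' => exact goodP_fst (chain'_pair hchain hsfx)
  | nil =>
    have hne : h0 ≠ v := by
      have hl := getLast?_of_suffix hsfx (by simp)
      simp only [List.getLast?_singleton] at hl
      rcases hlast with h | h <;> rw [hl] at h <;> simp at h <;> omega
    obtain ⟨u, hu⟩ := last_pair hchain hsfx hhead hne
    exact goodP_snd hu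

theorem suffix_tail {w v : ℕ} {δ' γ : List ℕ} (h : (v :: w :: δ') <:+ γ) :
    (w :: δ') <:+ γ :=
  List.IsSuffix.trans ⟨[v], rfl⟩ h

/-- Tracing the Seifert path through fan `k+1`, entered at the apex `ell a k + m`. -/
theorem fan_trace (a : List ℕ) (hpos : ∀ x ∈ a, 0 < x) (γ : List ℕ) (t : ℕ × ℕ)
    (ht : t = (1, 1) ∨ t = (0, 1))
    (hchain : List.Chain' (GoodP a t) γ)
    (hsteps : List.Chain' (IsStep a) γ)
    (hlast : γ.getLast? = some 0 ∨ γ.getLast? = some 1)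
    {k : ℕ} (hk1 : 1 ≤ k) (hkn : k < a.length) :
    ∀ m, 1 ≤ m → ell a k + m ≤ ell a (k + 1) →
    (∃ δ, ((ell a k + m) :: δ) <:+ γ) →
    (InCl a t (ell a k) ∧ ∃ δ, (ell a k :: δ) <:+ γ) ∨
    (¬ InCl a t (ell a k) ∧ ∃ δ, (ell a (k - 1) :: δ) <:+ γ) := by
  intro m
  induction m using Nat.strong_induction_on with
  | _ m IH =>
    intro hm1 hm2 hsfx0
    obtain ⟨δ, hsfx⟩ := hsfx0
    have hellk : 1 ≤ ell a k := ell_pos a hpos hk1 (by omega)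
    set v := ell a k + m with hvdef
    have hv2 : 2 ≤ v := by omega
    obtain ⟨w, δ', hsfx2⟩ := succ_of_suffix hlast hsfx hv2
    have hgood : GoodP a t v w := chain'_pair hchain hsfx2
    have hstep : IsStep a v w := chain'_pair hsteps hsfx2
    obtain ⟨-, hw⟩ := step_char a hstep
    have hInV : InCl a t v := goodP_fst hgood
    have hInW : InCl a t w := goodP_snd hgood
    have hsw : (w :: δ') <:+ γ := suffix_tail hsfx2
    have hvz : v - 2 + 2 = v := by omega
    rcases Nat.lt_or_ge m 2 with hm | hm
    · -- m = 1 : v sits on the top edge of fan k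
      have hm1' : m = 1 := by omega
      have hlt : ell a (k - 1) < ell a k := by
        have h1 := ell_strict a hpos (m := k - 1) (by omega)
        have h2 : k - 1 + 1 = k := by omega
        rwa [h2] at h1
      obtain ⟨hE, -⟩ := struct a hpos (v - 2) k hk1 (by omega) (by omega) (by omega)
      have hi1 : v - 2 + 1 = ell a k := by omega
      rw [hi1] at hE
      have hw' : w = ell a k ∨ w = ell a (k - 1) := by
        rcases Nat.even_or_odd k with hev | hod
        · rw [if_neg (by simpa [Nat.even_iff, Nat.odd_iff] using hev)] at hE
          rw [hE] at hw
          tauto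
        · rw [if_pos hod] at hE
          rw [hE] at hw
          tauto
      by_cases hIn : InCl a t (ell a k)
      · left
        refine ⟨hIn, ?_⟩
        rcases hw' with rfl | hwk
        · exact ⟨δ', hsw⟩
        · exfalso
          subst hwk
          rcases Nat.even_or_odd k with hev | hod
          · rw [if_neg (by simpa [Nat.even_iff, Nat.odd_iff] using hev)] at hE
            exact tri_contra a t (v - 2) (by rw [hE]) (by rw [hE]) hvz.symm hIn hInW
              hInV
          · rw [if_pos hod] at hE
            exact tri_contra a t (v - 2) (by rw [hE]) (by rw [hE]) hvz.symm hInW hIn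
              hInV
      · right
        refine ⟨hIn, ?_⟩
        rcases hw' with hwk | rfl
        · exact absurd (hwk ▸ hInW) hIn
        · exact ⟨δ', hsw⟩
    · -- m ≥ 2 : v is an interior apex of fan k+1
      obtain ⟨hE, -⟩ := struct a hpos (v - 2) (k + 1) (by omega) (by omega)
        (by simp only [Nat.add_sub_cancel]; omega) (by omega)
      simp only [Nat.add_sub_cancel] at hE
      have hi1 : v - 2 + 1 = v - 1 := by omega
      rw [hi1] at hE
      have hw' : w = ell a k ∨ w = v - 1 := by
        rcases Nat.even_or_odd (k + 1) with hev | hod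
        · rw [if_neg (by simpa [Nat.even_iff, Nat.odd_iff] using hev)] at hE
          rw [hE] at hw
          tauto
        · rw [if_pos hod] at hE
          rw [hE] at hw
          tauto
      by_cases hIn : InCl a t (ell a k)
      · left
        refine ⟨hIn, ?_⟩
        rcases hw' with rfl | hwk
        · exact ⟨δ', hsw⟩
        · exfalso
          subst hwk
          rcases Nat.even_or_odd (k + 1) with hev | hod
          · rw [if_neg (by simpa [Nat.even_iff, Nat.odd_iff] using hev)] at hE
            exact tri_contra a t (v - 2) (by rw [hE]) (by rw [hE]) hvz.symm hInW hIn
              hInV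
          · rw [if_pos hod] at hE
            exact tri_contra a t (v - 2) (by rw [hE]) (by rw [hE]) hvz.symm hIn hInW
              hInV
      · rcases hw' with hwk | hwk
        · exact absurd (hwk ▸ hInW) hIn
        · -- w = v - 1 = ell a k + (m - 1) : recurse
          have hrec := IH (m - 1) (by omega) (by omega) (by omega)
            ⟨δ', by rw [show ell a k + (m - 1) = w by omega]; exact hsw⟩
          rcases hrec with ⟨hIn2, -⟩ | hrec2
          · exact absurd hIn2 hIn
          · exact Or.inr hrec2

/-- Downward descent: the Seifert path reaches the top vertex of fan `k` whenever its
parity is allowed, and otherwise skips to the top vertex of fan `k-1`. -/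
theorem dwn (a : List ℕ) (hpos : ∀ x ∈ a, 0 < x) (γ : List ℕ) (t : ℕ × ℕ)
    (ht : t = (1, 1) ∨ t = (0, 1))
    (hchain : List.Chain' (GoodP a t) γ)
    (hsteps : List.Chain' (IsStep a) γ)
    (hlast : γ.getLast? = some 0 ∨ γ.getLast? = some 1)
    (hhead : γ.head? = some (ell a a.length))
    (h2 : 2 ≤ ell a a.length)
    (hin : InCl a t (ell a a.length)) :
    ∀ d k, k + d = a.length → 1 ≤ k →
    (InCl a t (ell a k) ∧ ∃ δ, (ell a k :: δ) <:+ γ) ∨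
    (¬ InCl a t (ell a k) ∧ ∃ δ, (ell a (k - 1) :: δ) <:+ γ) := by
  intro d
  induction d with
  | zero =>
    intro k hk hk1
    have hkn : k = a.length := by omega
    subst hkn
    left
    refine ⟨hin, ?_⟩
    cases γ with
    | nil => simp at hhead
    | cons b l =>
      simp only [List.head?_cons, Option.some.injEq] at hhead
      exact ⟨l, by rw [hhead]⟩
  | succ d ih =>
    intro k hk hk1
    rcases ih (k + 1) (by omega) (by omega) with ⟨hin1, δ, hsfx⟩ | ⟨hnin, δ, hsfx⟩
    · have hg : ell a k < ell a (k + 1) := ell_strict a hpos (by omega)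
      exact fan_trace a hpos γ t ht hchain hsteps hlast hk1 (by omega)
        (ell a (k + 1) - ell a k) (by omega) (by omega)
        ⟨δ, by rw [show ell a k + (ell a (k + 1) - ell a k) = ell a (k + 1) by omega]; exact hsfx⟩
    · have hsfx' : (ell a k :: δ) <:+ γ := by
        rwa [show k + 1 - 1 = k by omega] at hsfx
      have hin2 : InCl a t (ell a k) := par_in_cl hchain hhead h2 hlast hsfx'
      exact Or.inl ⟨hin2, δ, hsfx'⟩


theorem par2_zero (a : List ℕ) : par2 a 0 = (0, 1) := by simp [par2, vtx0]

theorem par2_one (a : List ℕ) : par2 a 1 = (1, 1) := by simp [par2, vtx1]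

theorem match_pair (a : List ℕ) (hpos : ∀ x ∈ a, 0 < x) (γ : List ℕ) (t : ℕ × ℕ)
    (ht : t = (1, 1) ∨ t = (0, 1))
    (hchain : List.Chain' (GoodP a t) γ)
    (hsteps : List.Chain' (IsStep a) γ)
    (hlast : γ.getLast? = some 0 ∨ γ.getLast? = some 1)
    (hhead : γ.head? = some (ell a a.length))
    (h2top : 2 ≤ ell a a.length)
    (hintop : InCl a t (ell a a.length))
    {k : ℕ} (hk2 : 2 ≤ k) (hkn : k ≤ a.length)
    (hin1 : InCl a t (ell a (k - 1))) (hin0 : InCl a t (ell a (k - 2))) :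
    (ell a (k - 1), ell a (k - 2)) ∈ γ.zip γ.tail := by
  obtain ⟨-, δ, hsfx⟩ | ⟨hnin, -⟩ := dwn a hpos γ t ht hchain hsteps hlast hhead h2top hintop
      (a.length - (k - 1)) (k - 1) (by omega) (by omega)
  swap
  · exact absurd hin1 hnin
  have h12 : 2 ≤ ell a (k - 1) := by
    by_contra hc
    push_neg at hc
    have he1 : 1 ≤ ell a (k - 1) := ell_pos a hpos (by omega) (by omega)
    have hke : k - 1 = 1 := by
      by_contra hk3
      have g0 : ell a 0 < ell a 1 := ell_strict a hpos (by omega)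
      have g1 : ell a 1 < ell a 2 := ell_strict a hpos (by omega)
      have g2 : ell a 2 ≤ ell a (k - 1) := ell_mono a (by omega)
      simp only [ell_zero] at g0
      omega
    rw [hke] at hin1 hc he1
    have he11 : ell a 1 = 1 := by omega
    rw [show k - 2 = 0 by omega] at hin0
    unfold InCl at hin1 hin0
    rw [he11, par2_one] at hin1
    rw [ell_zero, par2_zero] at hin0
    rcases hin1 with h | h <;> rcases hin0 with h' | h' <;>
      first
        | exact absurd (h'.trans h.symm) (by decide)
        | exact absurd h (by decide)
        | exact absurd h' (by decide)
  obtain ⟨w, δ', hsfx2⟩ := succ_of_suffix hlast hsfx h12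
  have hgood := chain'_pair hchain hsfx2
  have hstep := chain'_pair hsteps hsfx2
  obtain ⟨-, hw⟩ := step_char a hstep
  have hInW : InCl a t w := goodP_snd hgood
  set i := ell a (k - 1) - 2 with hidef
  have hvz : i + 2 = ell a (k - 1) := by omega
  have hl1 : ell a (k - 2) < ell a (k - 1) := by
    have g := ell_strict a hpos (m := k - 2) (by omega)
    rwa [show k - 2 + 1 = k - 1 by omega] at g
  rcases Nat.lt_or_ge i (ell a (k - 2)) with hcase | hcase
  · -- the (single) triangle of fan k-1 sits on an edge of fan k-2
    have heq : ell a (k - 2) = ell a (k - 1) - 1 := by omega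
    have hk3 : 3 ≤ k := by
      by_contra hc
      have hkk : k = 2 := by omega
      subst hkk
      simp only [Nat.sub_self, ell_zero] at heq
      omega
    have hlt2 : ell a (k - 3) < ell a (k - 2) := by
      have g := ell_strict a hpos (m := k - 3) (by omega)
      rwa [show k - 3 + 1 = k - 2 by omega] at g
    obtain ⟨hE, -⟩ := struct a hpos i (k - 2) (by omega) (by omega)
      (by rw [show k - 2 - 1 = k - 3 by omega]; omega) (by omega)
    rw [show k - 2 - 1 = k - 3 by omega] at hE
    have hi1 : i + 1 = ell a (k - 2) := by omega
    rw [hi1] at hE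
    have hw' : w = ell a (k - 2) ∨ w = ell a (k - 3) := by
      rcases Nat.even_or_odd (k - 2) with hev | hod
      · rw [if_neg (by simpa [Nat.even_iff, Nat.odd_iff] using hev)] at hE
        rw [hE] at hw
        tauto
      · rw [if_pos hod] at hE
        rw [hE] at hw
        tauto
    rcases hw' with hwk | hwk
    · subst hwk
      exact zip_tail_mem hsfx2
    · exfalso
      subst hwk
      rcases Nat.even_or_odd (k - 2) with hev | hod
      · rw [if_neg (by simpa [Nat.even_iff, Nat.odd_iff] using hev)] at hE
        exact tri_contra a t i (by rw [hE]) (by rw [hE]) hvz.symm hin0 hInW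
          hin1
      · rw [if_pos hod] at hE
        exact tri_contra a t i (by rw [hE]) (by rw [hE]) hvz.symm hInW hin0
          hin1
  · -- the top triangle of fan k-1 is interior to fan k-1
    obtain ⟨hE, -⟩ := struct a hpos i (k - 1) (by omega) (by omega)
      (by rw [show k - 1 - 1 = k - 2 by omega]; omega) (by omega)
    rw [show k - 1 - 1 = k - 2 by omega] at hE
    have hi1 : i + 1 = ell a (k - 1) - 1 := by omega
    rw [hi1] at hE
    have hw' : w = ell a (k - 2) ∨ w = ell a (k - 1) - 1 := by
      rcases Nat.even_or_odd (k - 1) with hev | hod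
      · rw [if_neg (by simpa [Nat.even_iff, Nat.odd_iff] using hev)] at hE
        rw [hE] at hw
        tauto
      · rw [if_pos hod] at hE
        rw [hE] at hw
        tauto
    rcases hw' with hwk | hwk
    · subst hwk
      exact zip_tail_mem hsfx2
    · exfalso
      subst hwk
      rcases Nat.even_or_odd (k - 1) with hev | hod
      · rw [if_neg (by simpa [Nat.even_iff, Nat.odd_iff] using hev)] at hE
        exact tri_contra a t i (by rw [hE]) (by rw [hE]) hvz.symm hInW hin0
          hin1
      · rw [if_pos hod] at hE
        exact tri_contra a t i (by rw [hE]) (by rw [hE]) hvz.symm hin0 hInW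
          hin1


theorem chain'_of_zip {R : ℕ → ℕ → Prop} :
    ∀ {l : List ℕ} {x y : ℕ}, List.Chain' R l → (x, y) ∈ l.zip l.tail → R x y := by
  intro l
  induction l with
  | nil => simp
  | cons a l' ih =>
    cases l' with
    | nil => simp
    | cons b l'' =>
      intro x y hc hm
      rw [List.tail_cons, List.zip_cons_cons] at hm
      rcases List.mem_cons.1 hm with he | hm2
      · obtain ⟨rfl, rfl⟩ := Prod.mk.injEq .. ▸ he
        exact (List.isChain_cons_cons.1 hc).1
      · exact ih (List.isChain_cons_cons.1 hc).2 hm2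

theorem bott_iff (a : List ℕ) (hpos : ∀ x ∈ a, 0 < x) (γ : List ℕ) (t : ℕ × ℕ)
    (ht : t = (1, 1) ∨ t = (0, 1))
    (hchain : List.Chain' (GoodP a t) γ)
    (hsteps : List.Chain' (IsStep a) γ)
    (hlast : γ.getLast? = some 0 ∨ γ.getLast? = some 1)
    (hhead : γ.head? = some (ell a a.length))
    (h2top : 2 ≤ ell a a.length)
    (hintop : InCl a t (ell a a.length))
    {k : ℕ} (hk2 : 2 ≤ k) (hkn : k ≤ a.length) :
    (bottomEdgeOn a γ k ↔ (InCl a t (ell a (k - 1)) ∧ InCl a t (ell a (k - 2)))) := by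
  have hl1 : ell a (k - 2) < ell a (k - 1) := by
    have g := ell_strict a hpos (m := k - 2) (by omega)
    rwa [show k - 2 + 1 = k - 1 by omega] at g
  obtain ⟨hE, -⟩ := struct a hpos (ell a (k - 1) - 1) (k - 1) (by omega) (by omega)
    (by rw [show k - 1 - 1 = k - 2 by omega]; omega) (by omega)
  rw [show k - 1 - 1 = k - 2 by omega] at hE
  rw [show ell a (k - 1) - 1 + 1 = ell a (k - 1) by omega] at hE
  unfold bottomEdgeOn onPath
  rw [show (a.take (k - 1)).sum = ell a (k - 1) from rfl]
  constructor
  · intro h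
    rcases Nat.even_or_odd (k - 1) with hev | hod
    · rw [if_neg (by simpa [Nat.even_iff, Nat.odd_iff] using hev)] at hE
      rw [hE] at h
      rcases h with h | h
      · have hg := chain'_of_zip hchain h
        exact ⟨goodP_fst hg, goodP_snd hg⟩
      · have hg := chain'_of_zip hchain h
        exact ⟨goodP_snd hg, goodP_fst hg⟩
    · rw [if_pos hod] at hE
      rw [hE] at h
      rcases h with h | h
      · have hg := chain'_of_zip hchain h
        exact ⟨goodP_snd hg, goodP_fst hg⟩
      · have hg := chain'_of_zip hchain h
        exact ⟨goodP_fst hg, goodP_snd hg⟩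
  · rintro ⟨hin1, hin0⟩
    have hp := match_pair a hpos γ t ht hchain hsteps hlast hhead h2top hintop hk2 hkn hin1 hin0
    rcases Nat.even_or_odd (k - 1) with hev | hod
    · rw [if_neg (by simpa [Nat.even_iff, Nat.odd_iff] using hev)] at hE
      rw [hE]
      exact Or.inl hp
    · rw [if_pos hod] at hE
      rw [hE]
      exact Or.inr hp

set_option maxHeartbeats 1000000 in
theorem tsgn_eq (a : List ℕ) (hpos : ∀ x ∈ a, 0 < x) (γ : List ℕ) (t : ℕ × ℕ)
    (ht : t = (1, 1) ∨ t = (0, 1))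
    (hchain : List.Chain' (GoodP a t) γ)
    (hsteps : List.Chain' (IsStep a) γ)
    (hlast : γ.getLast? = some 0 ∨ γ.getLast? = some 1)
    (hhead : γ.head? = some (ell a a.length))
    (h2top : 2 ≤ ell a a.length)
    (hintop : InCl a t (ell a a.length))
    (htopp : par2 a a.sum = t) :
    ∀ k, 1 ≤ k → k ≤ a.length →
    tsgn a γ k = if (Odd k ↔ InCl a t (ell a (k - 1))) then 1 else -1 := by
  intro k
  induction k with
  | zero => omega
  | succ k ih =>
    intro h1 hk
    rcases Nat.eq_zero_or_pos k with rfl | hk1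
    · have h0 : tsgn a γ 1 = if par2 a a.sum = (1, 1) then -1 else 1 := rfl
      rw [h0, htopp]
      have hz : (1 : ℕ) - 1 = 0 := rfl
      rw [hz, ell_zero]
      have hincl0 : InCl a t 0 ↔ t = (0, 1) := by
        unfold InCl
        rw [par2_zero]
        constructor
        · rintro (h | h)
          · exact h.symm
          · exact absurd h (by decide)
        · intro h
          exact Or.inl h.symm
      rcases ht with rfl | rfl
      · rw [if_pos rfl, if_neg (by rw [hincl0]; decide)]
      · rw [if_neg (by decide), if_pos (by rw [hincl0]; decide)]
    · obtain ⟨j, rfl⟩ : ∃ j, k = j + 1 := ⟨k - 1, by omega⟩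
      have hrec : tsgn a γ (j + 2) = (if bottomEdgeOn a γ (j + 2) then -1 else 1)
          * tsgn a γ (j + 1) := rfl
      have hz1 : (j + 1 : ℕ) - 1 = j := rfl
      have hz2 : (j + 2 : ℕ) - 1 = j + 1 := rfl
      have hz3 : (j + 2 : ℕ) - 2 = j := rfl
      rw [hrec, ih (by omega) (by omega), hz1, hz2]
      have hb := bott_iff a hpos γ t ht hchain hsteps hlast hhead h2top hintop
        (k := j + 2) (by omega) hk
      rw [hz2, hz3] at hb
      -- at least one of the two parities is allowed
      have hone : InCl a t (ell a (j + 1)) ∨ InCl a t (ell a j) := by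
        have hl1 : ell a j < ell a (j + 1) := ell_strict a hpos (by omega)
        obtain ⟨hE, -⟩ := struct a hpos (ell a (j + 1) - 1) (j + 1) (by omega) (by omega)
          (by simp only [Nat.add_sub_cancel]; omega) (by omega)
        simp only [Nat.add_sub_cancel] at hE
        rw [show ell a (j + 1) - 1 + 1 = ell a (j + 1) by omega] at hE
        have hd := par_distinct a (ell a (j + 1) - 1)
        have hA2 := par2_lt a (ell a j)
        have hB2 := par2_lt a (ell a (j + 1))
        have hfacts : par2 a (ell a j) ≠ par2 a (ell a (j + 1)) ∧
            par2 a (ell a j) ≠ (0, 0) ∧ par2 a (ell a (j + 1)) ≠ (0, 0) := by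
          rcases Nat.even_or_odd (j + 1) with hev | hod
          · rw [if_neg (by simpa [Nat.even_iff, Nat.odd_iff] using hev)] at hE
            rw [hE] at hd
            exact ⟨fun hh => hd.1 hh.symm, hd.2.2, hd.2.1⟩
          · rw [if_pos hod] at hE
            rw [hE] at hd
            exact ⟨hd.1, hd.2.1, hd.2.2⟩
        by_contra hno
        push_neg at hno
        obtain ⟨hn1, hn2⟩ := hno
        unfold InCl at hn1 hn2
        push_neg at hn1 hn2
        obtain ⟨hAB, hA0, hB0⟩ := hfacts
        rcases hAe : par2 a (ell a j) with ⟨A1, A2⟩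
        rcases hBe : par2 a (ell a (j + 1)) with ⟨B1, B2⟩
        rw [hAe] at hAB hA0 hn2 hA2
        rw [hBe] at hAB hB0 hn1 hB2
        rcases ht with rfl | rfl <;>
          simp only [Ne, Prod.mk.injEq, not_and] at hAB hA0 hB0 hn1 hn2 <;> omega
      have ho1 : Odd (j + 1) ↔ ¬ Odd j := by rw [Nat.odd_iff, Nat.odd_iff]; omega
      have ho2 : Odd (j + 2) ↔ Odd j := by rw [Nat.odd_iff, Nat.odd_iff]; omega
      by_cases hc1 : InCl a t (ell a (j + 1)) <;> by_cases hc2 : InCl a t (ell a j)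
      · rw [if_pos (hb.2 ⟨hc1, hc2⟩)]
        by_cases hj : Odd j
        · rw [if_neg (fun h => ho1.1 (h.2 hc2) hj), if_pos ⟨fun _ => hc1, fun _ => ho2.2 hj⟩]
          norm_num
        · rw [if_pos ⟨fun _ => hc2, fun _ => ho1.2 hj⟩,
            if_neg (fun h => hj (ho2.1 (h.2 hc1)))]
          norm_num
      · rw [if_neg (fun hh => hc2 (hb.1 hh).2)]
        by_cases hj : Odd j
        · rw [if_pos ⟨fun ho => absurd hj (ho1.1 ho), fun hin => absurd hin hc2⟩,
            if_pos ⟨fun _ => hc1, fun _ => ho2.2 hj⟩]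
          norm_num
        · rw [if_neg (fun h => hc2 (h.1 (ho1.2 hj))), if_neg (fun h => hj (ho2.1 (h.2 hc1)))]
          norm_num
      · rw [if_neg (fun hh => hc1 (hb.1 hh).1)]
        by_cases hj : Odd j
        · rw [if_neg (fun h => ho1.1 (h.2 hc2) hj), if_neg (fun h => hc1 (h.1 (ho2.2 hj)))]
          norm_num
        · rw [if_pos ⟨fun _ => hc2, fun _ => ho1.2 hj⟩,
            if_pos ⟨fun ho => absurd (ho2.1 ho) hj, fun hin => absurd hin hc1⟩]
          norm_num
      · rcases hone with h | h
        · exact absurd h hc1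
        · exact absurd h hc2


/-- **Corollary (sign of the last braid).**  Let `p/q = [a₁,…,aₙ]` be an irreducible
fraction with `0 < p/q < 1` such that `p/q ≡ 1/1` or `0/1 (mod 2)` (i.e. `p` and `q` are
both odd, or `p` is even and `q` is odd).  Then `t_n = +1` if the left vertex of the top
triangle `T_N` of `AT(p/q)` has label `≡ 1/0 (mod 2)`, and `t_n = −1` if the right vertex
of the top triangle has label `≡ 1/0 (mod 2)`.  (The top triangle's base edge is
`edgeIdx a (N − 1)`, where `N = a.sum − 1`.) -/
theorem sign_formula (a : List ℕ) (p q : ℕ)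
    (hpos : ∀ x ∈ a, 0 < x) (hne : a ≠ [])
    (hp : 0 < p) (hlt : p < q) (hcop : Nat.Coprime p q)
    (hval : cf a = (p : ℚ) / q)
    (hpar : (p % 2 = 1 ∧ q % 2 = 1) ∨ (p % 2 = 0 ∧ q % 2 = 1))
    (γ : List ℕ) (hγ : IsSeifert a γ) :
    (par2 a (edgeIdx a (a.sum - 2)).1 = (1, 0) → tsgn a γ a.length = 1) ∧
    (par2 a (edgeIdx a (a.sum - 2)).2 = (1, 0) → tsgn a γ a.length = -1) := by
  classical
  have hn1 : 1 ≤ a.length := List.length_pos_iff.2 hne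
  -- identification of the top label with (p, q)
  have hgen := genCF_eq a hpos 0 le_rfl
  rw [cf_eq_genCF] at hval
  have hv2 : genCF a 0 = ((conv a).2.1 : ℚ) / ((conv a).2.2 : ℚ) := by
    rw [hgen.2]; norm_num
  have hq0 : (0 : ℚ) < (q : ℚ) := by exact_mod_cast (by omega : 0 < q)
  have hC2 : 0 < (conv a).2.2 := conv_den_pos a hpos
  have hC2' : (0 : ℚ) < ((conv a).2.2 : ℚ) := by exact_mod_cast hC2
  have hcross : p * (conv a).2.2 = (conv a).2.1 * q := by
    have heq : (p : ℚ) / q = ((conv a).2.1 : ℚ) / ((conv a).2.2 : ℚ) := hval.symm.trans hv2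
    rw [div_eq_div_iff (by positivity) (by positivity)] at heq
    exact_mod_cast heq
  have hcopC : Nat.Coprime (conv a).2.1 (conv a).2.2 := by
    rw [← Nat.isCoprime_iff_coprime]
    rcases conv_det a with h | h
    · exact ⟨-((conv a).1.2 : ℤ), ((conv a).1.1 : ℤ), by linear_combination h⟩
    · exact ⟨((conv a).1.2 : ℤ), -((conv a).1.1 : ℤ), by linear_combination -h⟩
  have hC2q : (conv a).2.2 = q := by
    have hd1 : (conv a).2.2 ∣ q := by
      refine (Nat.Coprime.dvd_of_dvd_mul_right hcopC.symm) ?_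
      exact ⟨p, by rw [Nat.mul_comm q, ← hcross, Nat.mul_comm]⟩
    have hd2 : q ∣ (conv a).2.2 := by
      refine (Nat.Coprime.dvd_of_dvd_mul_right hcop.symm) ?_
      exact ⟨(conv a).2.1, by rw [Nat.mul_comm, hcross, Nat.mul_comm]⟩
    exact Nat.dvd_antisymm hd1 hd2
  have hC1p : (conv a).2.1 = p := by
    rw [hC2q] at hcross
    exact (Nat.eq_of_mul_eq_mul_right (by omega) hcross).symm
  have helln : ell a a.length = a.sum := ell_length a
  have htopl : vtxLabel a a.sum = (p, q) := by
    rw [← helln, lab_ell a hpos (le_refl a.length), List.take_length, ← hC1p, ← hC2q]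
  have hq2 : 2 ≤ q := by omega
  have hsum2 : 2 ≤ a.sum := by
    by_contra hc
    push_neg at hc
    have h01 : a.sum = 0 ∨ a.sum = 1 := by omega
    rcases h01 with h | h <;> rw [h] at htopl
    · rw [vtx0] at htopl
      simp [Prod.ext_iff] at htopl
      omega
    · rw [vtx1] at htopl
      simp [Prod.ext_iff] at htopl
      omega
  have htopp : par2 a a.sum = (p % 2, q % 2) := by simp [par2, htopl]
  have ht : ((p % 2, q % 2) : ℕ × ℕ) = (1, 1) ∨ ((p % 2, q % 2) : ℕ × ℕ) = (0, 1) := by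
    rcases hpar with ⟨h1, h2⟩ | ⟨h1, h2⟩
    · left; rw [h1, h2]
    · right; rw [h1, h2]
  obtain ⟨⟨hhead, hlast, hsteps⟩, -, hparity⟩ := hγ
  have hchain : List.Chain' (GoodP a (p % 2, q % 2)) γ := by
    unfold SeifertParity at hparity
    rcases ht with hte | hte
    · rw [if_pos (by rw [htopp, hte])] at hparity
      rw [hte]
      exact hparity
    · rw [if_neg (by rw [htopp, hte]; decide)] at hparity
      rw [hte]
      exact hparity
  have hheadl : γ.head? = some (ell a a.length) := by rw [helln]; exact hhead
  have h2top : 2 ≤ ell a a.length := by omega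
  have hintop : InCl a (p % 2, q % 2) (ell a a.length) := by
    left
    rw [helln]
    exact htopp
  have htsgn := tsgn_eq a hpos γ (p % 2, q % 2) ht hchain hsteps hlast hheadl h2top hintop
    htopp a.length hn1 le_rfl
  -- analysis of the base edge of the top triangle
  set i0 := a.sum - 2 with hi0
  have hiz : i0 + 2 = a.sum := by omega
  have hltn : ell a (a.length - 1) < ell a a.length := by
    have g := ell_strict a hpos (m := a.length - 1) (by omega)
    rwa [show a.length - 1 + 1 = a.length by omega] at g
  have hx : (Odd a.length → (edgeIdx a i0).1 = ell a (a.length - 1)) ∧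
      (¬ Odd a.length → (edgeIdx a i0).2 = ell a (a.length - 1)) := by
    rcases Nat.lt_or_ge i0 (ell a (a.length - 1)) with hcase | hcase
    · -- last fan has a single triangle
      have hn2 : 2 ≤ a.length := by
        by_contra hcn
        have hz : ell a (a.length - 1) = 0 := by rw [show a.length - 1 = 0 by omega, ell_zero]
        omega
      have hl2 : ell a (a.length - 2) < ell a (a.length - 1) := by
        have g := ell_strict a hpos (m := a.length - 2) (by omega)
        rwa [show a.length - 2 + 1 = a.length - 1 by omega] at g
      obtain ⟨hE, -⟩ := struct a hpos i0 (a.length - 1) (by omega) (by omega)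
        (by rw [show a.length - 1 - 1 = a.length - 2 by omega]; omega) (by omega)
      have hio : i0 + 1 = ell a (a.length - 1) := by omega
      have hoo : Odd (a.length - 1) ↔ ¬ Odd a.length := by
        rw [Nat.odd_iff, Nat.odd_iff]; omega
      constructor
      · intro hOn
        rw [if_neg (fun h => (hoo.1 h) hOn)] at hE
        rw [hE]
        exact hio
      · intro hOn
        rw [if_pos (hoo.2 hOn)] at hE
        rw [hE]
        exact hio
    · obtain ⟨hE, -⟩ := struct a hpos i0 a.length (by omega) le_rfl hcase (by omega)
      constructor
      · intro hOn
        rw [if_pos hOn] at hE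
        rw [hE]
      · intro hOn
        rw [if_neg hOn] at hE
        rw [hE]
  have hpd := par_distinct a i0
  have hap := apex_par a i0
  rw [hiz, htopp] at hap
  constructor
  · intro hP1
    by_cases hOn : Odd a.length
    · have hx1 := hx.1 hOn
      rw [htsgn, if_pos ⟨fun _ => Or.inr (hx1 ▸ hP1), fun _ => hOn⟩]
    · have hx2 := hx.2 hOn
      have hnin : ¬ InCl a (p % 2, q % 2) (ell a (a.length - 1)) := by
        rw [← hx2]
        rintro (hin | hin)
        · rw [hP1, hin] at hap
          rcases ht with hte | hte <;> rw [hte] at hap <;> exact absurd hap (by decide)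
        · exact hpd.1 (hP1.trans hin.symm)
      rw [htsgn, if_pos ⟨fun ho => absurd ho hOn, fun hin => absurd hin hnin⟩]
  · intro hP2
    by_cases hOn : Odd a.length
    · have hx1 := hx.1 hOn
      have hnin : ¬ InCl a (p % 2, q % 2) (ell a (a.length - 1)) := by
        rw [← hx1]
        rintro (hin | hin)
        · rw [hP2, hin] at hap
          rcases ht with hte | hte <;> rw [hte] at hap <;> exact absurd hap (by decide)
        · exact hpd.1 (hin.trans hP2.symm)
      rw [htsgn, if_neg (fun h => hnin (h.1 hOn))]
    · have hx2 := hx.2 hOn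
      rw [htsgn, if_neg (fun h => hOn (h.2 (Or.inr (hx2 ▸ hP2))))]


end TwoBridge

end
end
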